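/- arXiv:math/9904066 — 8 statements merged into one kernel-verified Lean document; each statement's English description precedes it below -/
import Mathlib

section
/- Let d ≥ 1, let f, g : ℝ^d → ℝ be nonnegative integrable functions with ∫ f = ∫ g = 1, and let Λ ⊆ ℝ^d be countable. If both f + Λ and g + Λ are packings of ℝ^d, then f + Λ is a tiling of ℝ^d at level 1 if and only if g + Λ is a tiling of ℝ^d at level 1. -/
open MeasureTheory Real Complex Filter Topology Metric Set Bornology ComplexConjugate
open scoped FourierTransform ENNReal RealInnerProductSpace ContDiff Classical Pointwise

noncomputable section

/-- The exponential `e_λ(x) = exp(2πi⟨λ,x⟩)`. -/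
def expChar {d : ℕ} (l x : EuclideanSpace ℝ (Fin d)) : ℂ :=
  Complex.exp (((2 * Real.pi * ⟪l, x⟫ : ℝ) : ℂ) * Complex.I)

/-- The Fourier transform `𝓕f(ξ) = ∫ f(x) e^{-2πi⟨ξ,x⟩} dx` of a real-valued function. -/
def ftR {d : ℕ} (f : EuclideanSpace ℝ (Fin d) → ℝ) : EuclideanSpace ℝ (Fin d) → ℂ :=
  𝓕 (fun x => (f x : ℂ))

/-- The Fourier transform of the indicator function of a set `Ω ⊆ ℝ^d`. -/
def ftInd {d : ℕ} (Ω : Set (EuclideanSpace ℝ (Fin d))) : EuclideanSpace ℝ (Fin d) → ℂ :=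
  𝓕 (Ω.indicator fun _ => (1 : ℂ))

/-- `f + Λ` is a packing of `ℝ^d`: `∑_{λ∈Λ} f(x-λ) ≤ 1` for a.e. `x`. -/
def packs {d : ℕ} (f : EuclideanSpace ℝ (Fin d) → ℝ) (Λ : Set (EuclideanSpace ℝ (Fin d))) : Prop :=
  ∀ᵐ x : EuclideanSpace ℝ (Fin d),
    ∑' l : Λ, ENNReal.ofReal (f (x - (l : EuclideanSpace ℝ (Fin d)))) ≤ 1

/-- `f + Λ` is a tiling of `ℝ^d` at level `ℓ`: `∑_{λ∈Λ} f(x-λ) = ℓ` for a.e. `x`. -/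
def tilesAt {d : ℕ} (f : EuclideanSpace ℝ (Fin d) → ℝ) (Λ : Set (EuclideanSpace ℝ (Fin d)))
    (ℓ : ℝ) : Prop :=
  ∀ᵐ x : EuclideanSpace ℝ (Fin d),
    ∑' l : Λ, ENNReal.ofReal (f (x - (l : EuclideanSpace ℝ (Fin d)))) = ENNReal.ofReal ℓ

section aux

variable {d : ℕ}

lemma tiles_of_tiles (f g : EuclideanSpace ℝ (Fin d) → ℝ)
    (hf0 : ∀ x, 0 ≤ f x) (hg0 : ∀ x, 0 ≤ g x)
    (hfi : Integrable f) (hgi : Integrable g)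
    (hf1 : (∫ x, f x) = 1) (hg1 : (∫ x, g x) = 1)
    (Λ : Set (EuclideanSpace ℝ (Fin d))) (hΛ : Λ.Countable)
    (hpg : packs g Λ) (htf : tilesAt f Λ 1) : tilesAt g Λ 1 := by
  haveI : Countable Λ := hΛ.to_subtype
  set μ : Measure (EuclideanSpace ℝ (Fin d)) := volume with hμ
  set F : EuclideanSpace ℝ (Fin d) → ℝ≥0∞ := fun x => ∑' l : Λ, ENNReal.ofReal (f (x - (l : EuclideanSpace ℝ (Fin d)))) with hF
  set G : EuclideanSpace ℝ (Fin d) → ℝ≥0∞ := fun x => ∑' l : Λ, ENNReal.ofReal (g (x - (l : EuclideanSpace ℝ (Fin d)))) with hG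
  -- measurability
  have hfm : AEMeasurable (fun x => ENNReal.ofReal (f x)) μ := hfi.aemeasurable.ennreal_ofReal
  have hgm : AEMeasurable (fun x => ENNReal.ofReal (g x)) μ := hgi.aemeasurable.ennreal_ofReal
  have hGm : AEMeasurable G μ := by
    refine AEMeasurable.ennreal_tsum fun l => ?_
    exact hgm.comp_quasiMeasurePreserving
      (measurePreserving_sub_right μ (l : EuclideanSpace ℝ (Fin d))).quasiMeasurePreserving
  -- normalization
  have hfL : ∫⁻ x, ENNReal.ofReal (f x) ∂μ = 1 := by
    rw [← ofReal_integral_eq_lintegral_ofReal hfi (ae_of_all _ hf0), hf1, ENNReal.ofReal_one]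
  have hgL : ∫⁻ x, ENNReal.ofReal (g x) ∂μ = 1 := by
    rw [← ofReal_integral_eq_lintegral_ofReal hgi (ae_of_all _ hg0), hg1, ENNReal.ofReal_one]
  have htf1 : ∀ᵐ y ∂μ, F y = 1 := by
    have h := htf; rw [tilesAt] at h; simpa [ENNReal.ofReal_one] using h
  have hpg1 : ∀ᵐ y ∂μ, G y ≤ 1 := hpg
  -- the key identity: the Λ-periodization of f ⋆ g is 1 everywhere
  have key : ∀ x : EuclideanSpace ℝ (Fin d), ∫⁻ t, ENNReal.ofReal (f t) * G (x - t) ∂μ = 1 := by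
    intro x
    have hconv : ∀ l : Λ,
        ∫⁻ t, ENNReal.ofReal (g t) * ENNReal.ofReal (f (x - t - (l : EuclideanSpace ℝ (Fin d)))) ∂μ
          = ∫⁻ s, ENNReal.ofReal (f s) * ENNReal.ofReal (g (x - s - (l : EuclideanSpace ℝ (Fin d)))) ∂μ := by
      intro l
      have hmp : MeasurePreserving (⇑(MeasurableEquiv.subLeft (x - (l : EuclideanSpace ℝ (Fin d))))) μ μ :=
        Measure.measurePreserving_sub_left μ (x - (l : EuclideanSpace ℝ (Fin d)))
      calc ∫⁻ t, ENNReal.ofReal (g t) * ENNReal.ofReal (f (x - t - (l : EuclideanSpace ℝ (Fin d)))) ∂μ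
          = ∫⁻ s, ENNReal.ofReal (g ((x - (l : EuclideanSpace ℝ (Fin d))) - s))
              * ENNReal.ofReal (f (x - ((x - (l : EuclideanSpace ℝ (Fin d))) - s) - (l : EuclideanSpace ℝ (Fin d)))) ∂μ := by
            exact hmp.lintegral_map_equiv
              (fun t => ENNReal.ofReal (g t) * ENNReal.ofReal (f (x - t - (l : EuclideanSpace ℝ (Fin d)))))
              (MeasurableEquiv.subLeft (x - (l : EuclideanSpace ℝ (Fin d))))
        _ = ∫⁻ s, ENNReal.ofReal (f s) * ENNReal.ofReal (g (x - s - (l : EuclideanSpace ℝ (Fin d)))) ∂μ := by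
            refine lintegral_congr fun s => ?_
            have h1 : x - ((x - (l : EuclideanSpace ℝ (Fin d))) - s) - (l : EuclideanSpace ℝ (Fin d)) = s := by abel
            have h2 : (x - (l : EuclideanSpace ℝ (Fin d))) - s = x - s - (l : EuclideanSpace ℝ (Fin d)) := by abel
            rw [h1, h2, mul_comm]
    have lhs1 : ∫⁻ t, ENNReal.ofReal (g t) * F (x - t) ∂μ = 1 := by
      have hFt : ∀ᵐ t ∂μ, F (x - t) = 1 :=
        (Measure.measurePreserving_sub_left μ x).quasiMeasurePreserving.ae htf1
      rw [show (1 : ℝ≥0∞) = ∫⁻ t, ENNReal.ofReal (g t) ∂μ from hgL.symm]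
      refine lintegral_congr_ae (hFt.mono fun t ht => ?_)
      simp only [ht, mul_one]
    have hfml : ∀ l : Λ, AEMeasurable (fun t => ENNReal.ofReal (f (x - t - (l : EuclideanSpace ℝ (Fin d))))) μ := by
      intro l
      have := hfm.comp_quasiMeasurePreserving
        (Measure.measurePreserving_sub_left μ (x - (l : EuclideanSpace ℝ (Fin d)))).quasiMeasurePreserving
      simpa [Function.comp_def, sub_right_comm] using this
    have hgml : ∀ l : Λ, AEMeasurable (fun t => ENNReal.ofReal (g (x - t - (l : EuclideanSpace ℝ (Fin d))))) μ := by
      intro l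
      have := hgm.comp_quasiMeasurePreserving
        (Measure.measurePreserving_sub_left μ (x - (l : EuclideanSpace ℝ (Fin d)))).quasiMeasurePreserving
      simpa [Function.comp_def, sub_right_comm] using this
    have expandF : ∫⁻ t, ENNReal.ofReal (g t) * F (x - t) ∂μ
        = ∑' l : Λ, ∫⁻ t, ENNReal.ofReal (g t) * ENNReal.ofReal (f (x - t - (l : EuclideanSpace ℝ (Fin d)))) ∂μ := by
      rw [← lintegral_tsum (f := fun (l : Λ) t => ENNReal.ofReal (g t) * ENNReal.ofReal (f (x - t - (l : EuclideanSpace ℝ (Fin d))))) fun l => (hgm.mul (hfml l))]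
      refine lintegral_congr fun t => ?_
      rw [hF]
      exact (ENNReal.tsum_mul_left).symm
    have expandG : ∫⁻ t, ENNReal.ofReal (f t) * G (x - t) ∂μ
        = ∑' l : Λ, ∫⁻ t, ENNReal.ofReal (f t) * ENNReal.ofReal (g (x - t - (l : EuclideanSpace ℝ (Fin d)))) ∂μ := by
      rw [← lintegral_tsum (f := fun (l : Λ) t => ENNReal.ofReal (f t) * ENNReal.ofReal (g (x - t - (l : EuclideanSpace ℝ (Fin d))))) fun l => (hfm.mul (hgml l))]
      refine lintegral_congr fun t => ?_
      rw [hG]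
      exact (ENNReal.tsum_mul_left).symm
    rw [expandG, ← tsum_congr hconv, ← expandF, lhs1]
  -- step D : ∫ f(t) (1 - G(x-t)) dt = 0 for every x
  have hGxm : ∀ x : EuclideanSpace ℝ (Fin d), AEMeasurable (fun t => G (x - t)) μ := fun x =>
    hGm.comp_quasiMeasurePreserving (Measure.measurePreserving_sub_left μ x).quasiMeasurePreserving
  have stepD : ∀ x : EuclideanSpace ℝ (Fin d), ∫⁻ t, ENNReal.ofReal (f t) * (1 - G (x - t)) ∂μ = 0 := by
    intro x
    have hGt : ∀ᵐ t ∂μ, G (x - t) ≤ 1 :=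
      (Measure.measurePreserving_sub_left μ x).quasiMeasurePreserving.ae hpg1
    have hsum : ∫⁻ t, (ENNReal.ofReal (f t) * G (x - t)
        + ENNReal.ofReal (f t) * (1 - G (x - t))) ∂μ = 1 := by
      have heq : ∫⁻ t, (ENNReal.ofReal (f t) * G (x - t)
          + ENNReal.ofReal (f t) * (1 - G (x - t))) ∂μ
          = ∫⁻ t, ENNReal.ofReal (f t) ∂μ := by
        refine lintegral_congr_ae (hGt.mono fun t ht => ?_)
        simp only [← mul_add, add_tsub_cancel_of_le ht, mul_one]
      rw [heq, hfL]
    rw [lintegral_add_left' (f := fun t => ENNReal.ofReal (f t) * G (x - t)) (hfm.mul (hGxm x)), key x] at hsum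
    have h10 : (1 : ℝ≥0∞) + ∫⁻ t, ENNReal.ofReal (f t) * (1 - G (x - t)) ∂μ = 1 + 0 := by
      simpa using hsum
    exact (ENNReal.add_right_inj ENNReal.one_ne_top).mp h10
  -- step E : Tonelli
  have hΦm : AEMeasurable (Function.uncurry fun x t =>
      ENNReal.ofReal (f t) * (1 - G (x - t))) (μ.prod μ) := by
    have h1 : AEMeasurable (fun p : (EuclideanSpace ℝ (Fin d)) × (EuclideanSpace ℝ (Fin d)) => ENNReal.ofReal (f p.2)) (μ.prod μ) :=
      hfm.comp_quasiMeasurePreserving Measure.quasiMeasurePreserving_snd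
    have h2 : AEMeasurable (fun p : (EuclideanSpace ℝ (Fin d)) × (EuclideanSpace ℝ (Fin d)) => G (p.1 - p.2)) (μ.prod μ) :=
      hGm.comp_quasiMeasurePreserving (quasiMeasurePreserving_sub_of_right_invariant μ μ)
    exact h1.mul (aemeasurable_const.sub h2)
  have hswap : ∫⁻ t, ∫⁻ x, ENNReal.ofReal (f t) * (1 - G (x - t)) ∂μ ∂μ = 0 := by
    rw [← lintegral_lintegral_swap hΦm]
    simp [stepD]
  set I : ℝ≥0∞ := ∫⁻ x, (1 - G x) ∂μ with hI
  have hinner : ∀ t : EuclideanSpace ℝ (Fin d), ∫⁻ x, ENNReal.ofReal (f t) * (1 - G (x - t)) ∂μ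
      = ENNReal.ofReal (f t) * I := by
    intro t
    rw [lintegral_const_mul' _ _ ENNReal.ofReal_ne_top, hI,
      lintegral_sub_right_eq_self (fun x => 1 - G x) t]
  have hI0 : I = 0 := by
    have : ∫⁻ t, ENNReal.ofReal (f t) * I ∂μ = 0 := by
      rw [← lintegral_congr hinner]; exact hswap
    rw [lintegral_mul_const'' I hfm, hfL, one_mul] at this
    exact this
  have hG1ae : ∀ᵐ x ∂μ, (1 : ℝ≥0∞) - G x = 0 := by
    have hm : AEMeasurable (fun x => (1 : ℝ≥0∞) - G x) μ := aemeasurable_const.sub hGm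
    exact (lintegral_eq_zero_iff' hm).mp hI0
  rw [tilesAt]
  filter_upwards [hG1ae, hpg1] with x h1 h2
  rw [ENNReal.ofReal_one]
  exact le_antisymm h2 (tsub_eq_zero_iff_le.mp h1)

end aux

/-- If `f, g ≥ 0` are integrable with `∫f = ∫g = 1` and both `f + Λ` and `g + Λ` are
packings of `ℝ^d`, then `f + Λ` is a tiling (at level 1) iff `g + Λ` is a tiling. -/
theorem tiling_from_packing {d : ℕ} (hd : 1 ≤ d)
    (f g : EuclideanSpace ℝ (Fin d) → ℝ)
    (hf0 : ∀ x, 0 ≤ f x) (hg0 : ∀ x, 0 ≤ g x)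
    (hfi : Integrable f) (hgi : Integrable g)
    (hf1 : (∫ x, f x) = 1) (hg1 : (∫ x, g x) = 1)
    (Λ : Set (EuclideanSpace ℝ (Fin d))) (hΛ : Λ.Countable)
    (hpf : packs f Λ) (hpg : packs g Λ) :
    tilesAt f Λ 1 ↔ tilesAt g Λ 1 :=
  ⟨fun h => tiles_of_tiles f g hf0 hg0 hfi hgi hf1 hg1 Λ hΛ hpg h,
   fun h => tiles_of_tiles g f hg0 hf0 hgi hfi hg1 hf1 Λ hΛ hpf h⟩
end
end

section
/- Let f, g : ℝ^d → ℝ be nonnegative integrable functions with ∫ f = ∫ g = 1, and let Λ ⊆ ℝ^d be countable such that both f + Λ and g + Λ are packings of ℝ^d. If ∑_{λ∈Λ} f(x−λ) = 1 for almost every x ∈ −{y : g(y) > 0}, then ∑_{λ∈Λ} g(y−λ) = 1 for almost every y ∈ −{x : f(x) > 0}. -/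
open MeasureTheory Real Complex Filter Topology Metric Set Bornology ComplexConjugate
open scoped FourierTransform ENNReal RealInnerProductSpace ContDiff Classical Pointwise

noncomputable section

/-- If `f, g ≥ 0` are integrable with `∫f = ∫g = 1`, both `f + Λ` and `g + Λ` pack `ℝ^d`,
and `f + Λ` tiles `-supp g` (at level 1), then `g + Λ` tiles `-supp f` (at level 1). -/
theorem tiles_neg_support {d : ℕ}
    (f g : EuclideanSpace ℝ (Fin d) → ℝ)
    (hf0 : ∀ x, 0 ≤ f x) (hg0 : ∀ x, 0 ≤ g x)
    (hfi : Integrable f) (hgi : Integrable g)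
    (hf1 : (∫ x, f x) = 1) (hg1 : (∫ x, g x) = 1)
    (Λ : Set (EuclideanSpace ℝ (Fin d))) (hΛ : Λ.Countable)
    (hpf : packs f Λ) (hpg : packs g Λ)
    (h : ∀ᵐ x : EuclideanSpace ℝ (Fin d),
      x ∈ -{y : EuclideanSpace ℝ (Fin d) | 0 < g y} →
      ∑' l : Λ, ENNReal.ofReal (f (x - (l : EuclideanSpace ℝ (Fin d)))) = 1) :
    ∀ᵐ y : EuclideanSpace ℝ (Fin d),
      y ∈ -{x : EuclideanSpace ℝ (Fin d) | 0 < f x} →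
      ∑' l : Λ, ENNReal.ofReal (g (y - (l : EuclideanSpace ℝ (Fin d)))) = 1 := by
  haveI := hΛ.to_subtype
  set μ : Measure (EuclideanSpace ℝ (Fin d)) := volume with hμ
  have hnegmp : MeasurePreserving (fun x : EuclideanSpace ℝ (Fin d) => -x) μ μ :=
    Measure.measurePreserving_neg μ
  set F : EuclideanSpace ℝ (Fin d) → ℝ≥0∞ :=
    fun x => ∑' l : Λ, ENNReal.ofReal (f (x - (l : EuclideanSpace ℝ (Fin d)))) with hF
  set G : EuclideanSpace ℝ (Fin d) → ℝ≥0∞ :=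
    fun x => ∑' l : Λ, ENNReal.ofReal (g (x - (l : EuclideanSpace ℝ (Fin d)))) with hG
  have hfm : AEMeasurable (fun x => ENNReal.ofReal (f x)) μ := hfi.aemeasurable.ennreal_ofReal
  have hgm : AEMeasurable (fun x => ENNReal.ofReal (g x)) μ := hgi.aemeasurable.ennreal_ofReal
  have hgml : ∀ l : Λ, AEMeasurable
      (fun x => ENNReal.ofReal (g (x - (l : EuclideanSpace ℝ (Fin d))))) μ := fun l =>
    hgm.comp_quasiMeasurePreserving
      (measurePreserving_sub_right μ (l : EuclideanSpace ℝ (Fin d))).quasiMeasurePreserving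
  have hGm : AEMeasurable G μ := AEMeasurable.ennreal_tsum hgml
  have hGnegm : AEMeasurable (fun x => G (-x)) μ :=
    hGm.comp_quasiMeasurePreserving hnegmp.quasiMeasurePreserving
  -- the key exchange identity
  have key : ∫⁻ x, ENNReal.ofReal (g (-x)) * F x ∂μ
      = ∫⁻ y, ENNReal.ofReal (f y) * G (-y) ∂μ := by
    have step1 : ∫⁻ x, ENNReal.ofReal (g (-x)) * F x ∂μ
        = ∑' l : Λ, ∫⁻ x, ENNReal.ofReal (g (-x)) *
            ENNReal.ofReal (f (x - (l : EuclideanSpace ℝ (Fin d)))) ∂μ := by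
      have hmeas : ∀ l : Λ, AEMeasurable (fun x => ENNReal.ofReal (g (-x)) *
          ENNReal.ofReal (f (x - (l : EuclideanSpace ℝ (Fin d))))) μ := fun l =>
        (hgm.comp_quasiMeasurePreserving hnegmp.quasiMeasurePreserving).mul
          (hfm.comp_quasiMeasurePreserving
            (measurePreserving_sub_right μ (l : EuclideanSpace ℝ (Fin d))).quasiMeasurePreserving)
      rw [← lintegral_tsum hmeas]
      apply lintegral_congr
      intro x
      exact (ENNReal.tsum_mul_left).symm
    have step2 : ∀ l : Λ, ∫⁻ x, ENNReal.ofReal (g (-x)) *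
        ENNReal.ofReal (f (x - (l : EuclideanSpace ℝ (Fin d)))) ∂μ
        = ∫⁻ y, ENNReal.ofReal (f y) *
            ENNReal.ofReal (g (-y - (l : EuclideanSpace ℝ (Fin d)))) ∂μ := by
      intro l
      have := (measurePreserving_add_right μ (l : EuclideanSpace ℝ (Fin d))).lintegral_map_equiv
        (fun x => ENNReal.ofReal (g (-x)) *
          ENNReal.ofReal (f (x - (l : EuclideanSpace ℝ (Fin d)))))
        (MeasurableEquiv.addRight (l : EuclideanSpace ℝ (Fin d)))
      rw [this]
      congr 1
      ext y
      have h1 : (MeasurableEquiv.addRight (l : EuclideanSpace ℝ (Fin d))) y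
          = y + (l : EuclideanSpace ℝ (Fin d)) := rfl
      rw [h1]
      have h2 : -(y + (l : EuclideanSpace ℝ (Fin d))) = -y - (l : EuclideanSpace ℝ (Fin d)) := by
        abel
      rw [add_sub_cancel_right, h2, mul_comm]
    have step3 : ∑' l : Λ, ∫⁻ y, ENNReal.ofReal (f y) *
        ENNReal.ofReal (g (-y - (l : EuclideanSpace ℝ (Fin d)))) ∂μ
        = ∫⁻ y, ENNReal.ofReal (f y) * G (-y) ∂μ := by
      have hmeas : ∀ l : Λ, AEMeasurable (fun y => ENNReal.ofReal (f y) *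
          ENNReal.ofReal (g (-y - (l : EuclideanSpace ℝ (Fin d))))) μ := fun l =>
        hfm.mul ((hgml l).comp_quasiMeasurePreserving hnegmp.quasiMeasurePreserving)
      rw [← lintegral_tsum hmeas]
      apply lintegral_congr
      intro y
      exact ENNReal.tsum_mul_left
    rw [step1]
    rw [tsum_congr step2]
    exact step3
  -- LHS equals 1
  have hgneg_ae : ∀ᵐ x ∂μ, ENNReal.ofReal (g (-x)) * F x = ENNReal.ofReal (g (-x)) := by
    filter_upwards [h] with x hx
    by_cases hgx : 0 < g (-x)
    · have : x ∈ -{y : EuclideanSpace ℝ (Fin d) | 0 < g y} := by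
        rw [Set.mem_neg]; exact hgx
      have hx1 : F x = 1 := hx this
      rw [hx1, mul_one]
    · have : g (-x) = 0 := le_antisymm (not_lt.mp hgx) (hg0 _)
      simp [this]
  have lint_g : ∫⁻ x, ENNReal.ofReal (g (-x)) ∂μ = 1 := by
    have hmap : ∫⁻ x, ENNReal.ofReal (g x) ∂μ = ∫⁻ x, ENNReal.ofReal (g (-x)) ∂μ :=
      hnegmp.lintegral_map_equiv (fun x => ENNReal.ofReal (g x)) (MeasurableEquiv.neg _)
    rw [← hmap, ← ofReal_integral_eq_lintegral_ofReal hgi (ae_of_all _ hg0), hg1,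
      ENNReal.ofReal_one]
  have lhs1 : ∫⁻ x, ENNReal.ofReal (g (-x)) * F x ∂μ = 1 := by
    rw [lintegral_congr_ae hgneg_ae, lint_g]
  have lint_f : ∫⁻ x, ENNReal.ofReal (f x) ∂μ = 1 := by
    rw [← ofReal_integral_eq_lintegral_ofReal hfi (ae_of_all _ hf0), hf1, ENNReal.ofReal_one]
  -- packing bound for G ∘ neg
  have hGneg_le : ∀ᵐ y ∂μ, G (-y) ≤ 1 :=
    hnegmp.quasiMeasurePreserving.ae hpg
  have hble : ∀ᵐ y ∂μ, ENNReal.ofReal (f y) * G (-y) ≤ ENNReal.ofReal (f y) := by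
    filter_upwards [hGneg_le] with y hy
    calc ENNReal.ofReal (f y) * G (-y) ≤ ENNReal.ofReal (f y) * 1 := by
          exact mul_le_mul_right hy _
      _ = ENNReal.ofReal (f y) := mul_one _
  have hbm : AEMeasurable (fun y => ENNReal.ofReal (f y) * G (-y)) μ := hfm.mul hGnegm
  have hbfin : ∫⁻ y, ENNReal.ofReal (f y) * G (-y) ∂μ ≠ (∞ : ℝ≥0∞) := by
    rw [← key, lhs1]; exact ENNReal.one_ne_top
  -- equality a.e.
  have hsub : ∫⁻ y, (ENNReal.ofReal (f y) - ENNReal.ofReal (f y) * G (-y)) ∂μ = 0 := by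
    rw [lintegral_sub' hbm hbfin hble, ← key, lhs1, lint_f, tsub_self]
  have haezero : ∀ᵐ y ∂μ, ENNReal.ofReal (f y) - ENNReal.ofReal (f y) * G (-y) = 0 := by
    have := (lintegral_eq_zero_iff' (hfm.sub hbm)).mp hsub
    filter_upwards [this] with y hy
    simpa using hy
  have haeeq : ∀ᵐ y ∂μ, 0 < f y → G (-y) = 1 := by
    filter_upwards [haezero, hble] with y h0 h1 hfy
    have hle : ENNReal.ofReal (f y) ≤ ENNReal.ofReal (f y) * G (-y) := by
      rwa [← tsub_eq_zero_iff_le]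
    have heq : ENNReal.ofReal (f y) = ENNReal.ofReal (f y) * G (-y) := le_antisymm hle h1
    set c := ENNReal.ofReal (f y) with hc
    have hc0 : c ≠ 0 := by
      simp only [hc, ne_eq, ENNReal.ofReal_eq_zero, not_le]; exact hfy
    have hct : c ≠ (∞ : ℝ≥0∞) := ENNReal.ofReal_ne_top
    calc G (-y) = (c⁻¹ * c) * G (-y) := by rw [ENNReal.inv_mul_cancel hc0 hct, one_mul]
      _ = c⁻¹ * (c * G (-y)) := by rw [mul_assoc]
      _ = c⁻¹ * c := by rw [← heq]
      _ = 1 := ENNReal.inv_mul_cancel hc0 hct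
  -- transfer along negation
  have final := hnegmp.quasiMeasurePreserving.ae haeeq
  filter_upwards [final] with y hy hymem
  have : 0 < f (-y) := by rwa [Set.mem_neg] at hymem
  have := hy this
  rwa [neg_neg] at this
end
end

section
/- Let Ω ⊆ ℝ^d be a measurable set of Lebesgue measure 1 and Λ ⊆ ℝ^d countable. The family of exponentials E_Λ = {e_λ : λ ∈ Λ} is an orthogonal set in L²(Ω) (i.e., ⟨e_λ, e_μ⟩_Ω = 0 for all λ ≠ μ in Λ) if and only if |𝓕1_Ω|² + Λ is a packing of ℝ^d, i.e., ∑_{λ∈Λ} |𝓕1_Ω(x−λ)|² ≤ 1 for every x ∈ ℝ^d. -/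
open MeasureTheory Real Complex Filter Topology Metric Set Bornology ComplexConjugate
open scoped FourierTransform ENNReal RealInnerProductSpace ContDiff Classical Pointwise

noncomputable section

lemma ftInd_eq {d : ℕ} (Ω : Set (EuclideanSpace ℝ (Fin d))) (hΩm : MeasurableSet Ω)
    (ξ : EuclideanSpace ℝ (Fin d)) :
    ftInd Ω ξ = ∫ x in Ω, Complex.exp (((-2 * Real.pi * ⟪x, ξ⟫ : ℝ) : ℂ) * Complex.I) := by
  rw [ftInd, Real.fourier_eq', ← integral_indicator hΩm]
  congr 1
  ext x
  by_cases hx : x ∈ Ω <;>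
    simp [hx, Set.indicator_of_mem, Set.indicator_of_notMem, smul_eq_mul]

lemma integral_expChar_eq {d : ℕ} (Ω : Set (EuclideanSpace ℝ (Fin d))) (hΩm : MeasurableSet Ω)
    (l m : EuclideanSpace ℝ (Fin d)) :
    (∫ x in Ω, expChar l x * conj (expChar m x)) = ftInd Ω (m - l) := by
  rw [ftInd_eq Ω hΩm]
  refine integral_congr_ae (Eventually.of_forall fun x => ?_)
  simp only [expChar]
  rw [← Complex.exp_conj, ← Complex.exp_add]
  congr 1
  have h1 : (-2 * Real.pi * ⟪x, m - l⟫ : ℝ) = 2 * Real.pi * ⟪l, x⟫ + -(2 * Real.pi * ⟪m, x⟫) := by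
    rw [inner_sub_right, real_inner_comm x m, real_inner_comm x l]; ring
  rw [map_mul, Complex.conj_I, Complex.conj_ofReal, h1]
  push_cast
  ring

lemma ftInd_zero {d : ℕ} (Ω : Set (EuclideanSpace ℝ (Fin d))) (hΩm : MeasurableSet Ω)
    (hΩ1 : volume Ω = 1) : ftInd Ω 0 = 1 := by
  rw [ftInd_eq Ω hΩm]
  simp [inner_zero_right, Measure.restrict_apply_univ, measureReal_def, hΩ1]

/-- The exponentials `e_λ`, `λ ∈ Λ`, are pairwise orthogonal in `L²(Ω)` if and only if
`|𝓕1_Ω|² + Λ` is a packing of `ℝ^d`, i.e. `∑_{λ∈Λ} |𝓕1_Ω(x-λ)|² ≤ 1` for every `x`. -/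
theorem orthogonal_iff_packing {d : ℕ} (Ω : Set (EuclideanSpace ℝ (Fin d)))
    (hΩm : MeasurableSet Ω) (hΩ1 : volume Ω = 1)
    (Λ : Set (EuclideanSpace ℝ (Fin d))) (hΛ : Λ.Countable) :
    (∀ l ∈ Λ, ∀ m ∈ Λ, l ≠ m →
      (∫ x in Ω, expChar l x * conj (expChar m x)) = 0) ↔
    (∀ x : EuclideanSpace ℝ (Fin d),
      ∑' l : Λ, ENNReal.ofReal (‖ftInd Ω (x - (l : EuclideanSpace ℝ (Fin d)))‖ ^ 2) ≤ 1) := by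
  constructor
  · intro hOrth x
    set μ : Measure (EuclideanSpace ℝ (Fin d)) := volume.restrict Ω with hμ
    haveI : IsFiniteMeasure μ :=
      ⟨by rw [hμ, Measure.restrict_apply_univ, hΩ1]; exact ENNReal.one_lt_top⟩
    have hcont : ∀ a : EuclideanSpace ℝ (Fin d), Continuous fun t => expChar a t := by
      intro a
      apply Complex.continuous_exp.comp
      exact (Complex.continuous_ofReal.comp
        (continuous_const.mul (continuous_const.inner continuous_id))).mul continuous_const
    have hmem : ∀ a : EuclideanSpace ℝ (Fin d), MemLp (fun t => expChar a t) 2 μ := by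
      intro a
      refine MemLp.mono_exponent (memLp_top_of_bound (hcont a).aestronglyMeasurable 1
        (Eventually.of_forall fun t => ?_)) le_top
      simp [expChar, Complex.norm_exp]
    set v : EuclideanSpace ℝ (Fin d) → Lp ℂ 2 μ := fun a => (hmem a).toLp _ with hv
    have hinner : ∀ a b : EuclideanSpace ℝ (Fin d),
        (inner ℂ (v a) (v b) : ℂ) = ftInd Ω (a - b) := by
      intro a b
      rw [MeasureTheory.L2.inner_def]
      have h1 : (fun t => (inner ℂ ((v a) t) ((v b) t) : ℂ))
          =ᵐ[μ] fun t => expChar b t * conj (expChar a t) := by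
        filter_upwards [(hmem a).coeFn_toLp, (hmem b).coeFn_toLp] with t h h'
        simp only [hv] at h h' ⊢
        rw [h, h', RCLike.inner_apply, mul_comm]
      rw [integral_congr_ae h1]
      exact integral_expChar_eq Ω hΩm b a
    have horth : Orthonormal ℂ (fun i : Λ => v (i : EuclideanSpace ℝ (Fin d))) := by
      rw [orthonormal_iff_ite]
      intro i j
      by_cases hij : i = j
      · subst hij; rw [hinner, sub_self, ftInd_zero Ω hΩm hΩ1]; simp
      · rw [hinner, if_neg hij]
        have hne : (j : EuclideanSpace ℝ (Fin d)) ≠ i := by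
          intro h; exact hij (Subtype.ext h.symm)
        have h0 := hOrth j j.2 i i.2 hne
        rwa [integral_expChar_eq Ω hΩm] at h0
    have hfx := hmem x
    have hb := horth.tsum_inner_products_le (hfx.toLp _)
    have hs := horth.inner_products_summable (x := hfx.toLp _)
    have hnorm : ∀ i : Λ,
        ‖(inner ℂ (v (i : EuclideanSpace ℝ (Fin d))) (hfx.toLp _) : ℂ)‖ ^ 2
          = ‖ftInd Ω (x - (i : EuclideanSpace ℝ (Fin d)))‖ ^ 2 := by
      intro i
      have h1 : (inner ℂ (hfx.toLp _) (v (i : EuclideanSpace ℝ (Fin d))) : ℂ)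
          = ftInd Ω (x - (i : EuclideanSpace ℝ (Fin d))) := hinner x i
      rw [← inner_conj_symm, h1, RCLike.norm_conj]
    have hsum : Summable fun i : Λ => ‖ftInd Ω (x - (i : EuclideanSpace ℝ (Fin d)))‖ ^ 2 :=
      hs.congr fun i => hnorm i
    calc ∑' i : Λ, ENNReal.ofReal (‖ftInd Ω (x - (i : EuclideanSpace ℝ (Fin d)))‖ ^ 2)
        = ENNReal.ofReal (∑' i : Λ, ‖ftInd Ω (x - (i : EuclideanSpace ℝ (Fin d)))‖ ^ 2) :=
          (ENNReal.ofReal_tsum_of_nonneg (fun _ => by positivity) hsum).symm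
      _ ≤ 1 := by
          rw [← ENNReal.ofReal_one]
          apply ENNReal.ofReal_le_ofReal
          have h2 : ∑' i : Λ, ‖ftInd Ω (x - (i : EuclideanSpace ℝ (Fin d)))‖ ^ 2
              = ∑' i : Λ, ‖(inner ℂ (v (i : EuclideanSpace ℝ (Fin d))) (hfx.toLp _) : ℂ)‖ ^ 2 :=
            tsum_congr fun i => (hnorm i).symm
          rw [h2]
          refine hb.trans (le_of_eq ?_)
          have h3 := @inner_self_eq_norm_sq ℂ _ _ _ _ (hfx.toLp _)
          rw [← h3]
          have h4 : (inner ℂ (hfx.toLp _) (hfx.toLp _) : ℂ) = ftInd Ω (x - x) := hinner x x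
          rw [h4, sub_self, ftInd_zero Ω hΩm hΩ1]
          simp
  · intro hpack l hl m hm hlm
    rw [integral_expChar_eq Ω hΩm]
    have h2 := hpack m
    have hij : (⟨l, hl⟩ : Λ) ≠ ⟨m, hm⟩ := by simpa using hlm
    have hle : ENNReal.ofReal (‖ftInd Ω (m - l)‖ ^ 2)
        + ENNReal.ofReal (‖ftInd Ω (m - m)‖ ^ 2) ≤ 1 := by
      refine le_trans ?_ h2
      have h3 := ENNReal.sum_le_tsum (s := ({⟨l, hl⟩, ⟨m, hm⟩} : Finset Λ))
        (f := fun i : Λ => ENNReal.ofReal (‖ftInd Ω (m - (i : EuclideanSpace ℝ (Fin d)))‖ ^ 2))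
      rwa [Finset.sum_pair hij] at h3
    rw [sub_self, ftInd_zero Ω hΩm hΩ1] at hle
    simp only [norm_one, one_pow, ENNReal.ofReal_one] at hle
    have h5 : ‖ftInd Ω (m - l)‖ ^ 2 ≤ 0 := by
      have h50 : ENNReal.ofReal (‖ftInd Ω (m - l)‖ ^ 2) + 1 ≤ 0 + 1 := by simpa using hle
      have h51 : ENNReal.ofReal (‖ftInd Ω (m - l)‖ ^ 2) = 0 :=
        le_antisymm ((ENNReal.add_le_add_iff_right ENNReal.one_ne_top).mp h50) zero_le
      exact ENNReal.ofReal_eq_zero.mp h51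
    have h7 : ‖ftInd Ω (m - l)‖ = 0 := by nlinarith [norm_nonneg (ftInd Ω (m - l))]
    exact norm_eq_zero.mp h7
end
end

section
/- Let Ω ⊆ ℝ^d be a measurable set of Lebesgue measure 1 and Λ ⊆ ℝ^d countable. The family E_Λ = {e_λ : λ ∈ Λ} is an orthonormal basis of L²(Ω) (i.e., Λ is a spectrum of Ω) if and only if ∑_{λ∈Λ} |𝓕1_Ω(x−λ)|² = 1 for every x ∈ ℝ^d, i.e., |𝓕1_Ω|² + Λ is a tiling of ℝ^d at level 1. -/
open MeasureTheory Real Complex Filter Topology Metric Set Bornology ComplexConjugate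
open scoped FourierTransform ENNReal RealInnerProductSpace ContDiff Classical Pointwise

noncomputable section

/-- `Λ` is a spectrum of `Ω`: the exponentials `e_λ`, `λ ∈ Λ`, form an orthonormal
family in `L²(Ω)` which is complete (any `L²(Ω)` function orthogonal to all of them
vanishes a.e.), i.e. an orthonormal basis of `L²(Ω)`. -/
def isSpectrum {d : ℕ} (Ω Λ : Set (EuclideanSpace ℝ (Fin d))) : Prop :=
  (∀ l ∈ Λ, ∀ m ∈ Λ,
    (∫ x in Ω, expChar l x * conj (expChar m x)) = if l = m then 1 else 0) ∧
  (∀ f : EuclideanSpace ℝ (Fin d) → ℂ, MemLp f 2 (volume.restrict Ω) →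
    (∀ l ∈ Λ, (∫ x in Ω, f x * conj (expChar l x)) = 0) → f =ᵐ[volume.restrict Ω] 0)

namespace SpecTile

variable {d : ℕ} {Ω : Set (EuclideanSpace ℝ (Fin d))}

lemma expChar_zero (x : EuclideanSpace ℝ (Fin d)) : expChar 0 x = 1 := by
  simp [expChar]

lemma expChar_add (a b x : EuclideanSpace ℝ (Fin d)) :
    expChar (a + b) x = expChar a x * expChar b x := by
  rw [expChar, expChar, expChar, ← Complex.exp_add, inner_add_left]
  push_cast
  ring_nf

lemma conj_expChar (a x : EuclideanSpace ℝ (Fin d)) :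
    conj (expChar a x) = expChar (-a) x := by
  rw [expChar, expChar, ← Complex.exp_conj, inner_neg_left]
  congr 1
  simp only [map_mul, Complex.conj_I, Complex.conj_ofReal]
  push_cast
  ring

lemma norm_expChar (a x : EuclideanSpace ℝ (Fin d)) : ‖expChar a x‖ = 1 := by
  rw [expChar, Complex.norm_exp]
  simp

lemma continuous_expChar (a : EuclideanSpace ℝ (Fin d)) : Continuous (expChar a) := by
  apply Complex.continuous_exp.comp
  exact ((Complex.continuous_ofReal.comp
    ((continuous_const.mul ((continuous_const.inner continuous_id))))).mul continuous_const)

lemma fourierChar_smul (x v : EuclideanSpace ℝ (Fin d)) (c : ℂ) :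
    𝐞 (-⟪v, x⟫) • c = expChar (-x) v * c := by
  rw [Circle.smul_def, Real.fourierChar_apply, expChar, smul_eq_mul]
  have h : 2 * π * -⟪v, x⟫ = 2 * π * ⟪-x, v⟫ := by
    rw [inner_neg_left, real_inner_comm]
  rw [h]

lemma ftInd_eq (hΩm : MeasurableSet Ω) (ξ : EuclideanSpace ℝ (Fin d)) :
    ftInd Ω ξ = ∫ x in Ω, expChar (-ξ) x := by
  rw [ftInd, Real.fourier_eq, ← integral_indicator hΩm]
  congr 1
  ext v
  by_cases hv : v ∈ Ω
  · simp only [Set.indicator_of_mem hv]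
    rw [fourierChar_smul, mul_one]
  · simp [Set.indicator_of_notMem hv]

lemma setIntegral_expChar (hΩm : MeasurableSet Ω) (t : EuclideanSpace ℝ (Fin d)) :
    ∫ x in Ω, expChar t x = ftInd Ω (-t) := by
  rw [ftInd_eq hΩm, neg_neg]

lemma ftInd_zero (hΩm : MeasurableSet Ω) (hΩ1 : volume Ω = 1) : ftInd Ω 0 = 1 := by
  rw [ftInd_eq hΩm, neg_zero]
  simp only [expChar_zero]
  simp [setIntegral_const, Measure.real, hΩ1]

lemma ftInd_neg (hΩm : MeasurableSet Ω) (ξ : EuclideanSpace ℝ (Fin d)) :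
    ftInd Ω (-ξ) = conj (ftInd Ω ξ) := by
  rw [ftInd_eq hΩm, ftInd_eq hΩm, neg_neg, ← integral_conj]
  congr 1
  ext x
  rw [conj_expChar, neg_neg]

lemma norm_ftInd_neg (hΩm : MeasurableSet Ω) (ξ : EuclideanSpace ℝ (Fin d)) :
    ‖ftInd Ω (-ξ)‖ = ‖ftInd Ω ξ‖ := by
  rw [ftInd_neg hΩm, RCLike.norm_conj]

lemma integral_expChar_mul_conj (hΩm : MeasurableSet Ω) (l m : EuclideanSpace ℝ (Fin d)) :
    (∫ x in Ω, expChar l x * conj (expChar m x)) = ftInd Ω (m - l) := by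
  have h : (fun x => expChar l x * conj (expChar m x)) = fun x => expChar (l - m) x := by
    funext x
    rw [conj_expChar, ← expChar_add, sub_eq_add_neg]
  rw [h, setIntegral_expChar hΩm, neg_sub]

lemma isFinite_restrict (hΩ1 : volume Ω = 1) : IsFiniteMeasure (volume.restrict Ω) := by
  constructor
  rw [Measure.restrict_apply_univ, hΩ1]
  exact ENNReal.one_lt_top

lemma memL2_expChar (hΩ1 : volume Ω = 1) (t : EuclideanSpace ℝ (Fin d)) :
    MemLp (expChar t) 2 (volume.restrict Ω) := by
  haveI := isFinite_restrict hΩ1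
  exact MemLp.of_bound (continuous_expChar t).aestronglyMeasurable 1
    (Filter.Eventually.of_forall fun x => le_of_eq (norm_expChar t x))

/-- The exponential as an element of `L²(Ω)`. -/
def eV (hΩ1 : volume Ω = 1) (t : EuclideanSpace ℝ (Fin d)) :
    Lp ℂ 2 (volume.restrict Ω) :=
  (memL2_expChar hΩ1 t).toLp (expChar t)

lemma inner_eV_left (hΩ1 : volume Ω = 1)
    (t : EuclideanSpace ℝ (Fin d)) (F : Lp ℂ 2 (volume.restrict Ω)) :
    (inner ℂ (eV hΩ1 t) F : ℂ) = ∫ x in Ω, expChar (-t) x * F x := by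
  rw [MeasureTheory.L2.inner_def]
  apply integral_congr_ae
  filter_upwards [(memL2_expChar hΩ1 t).coeFn_toLp] with x hx
  rw [RCLike.inner_apply, eV, hx, conj_expChar, mul_comm]

lemma inner_eV (hΩm : MeasurableSet Ω) (hΩ1 : volume Ω = 1)
    (a b : EuclideanSpace ℝ (Fin d)) :
    (inner ℂ (eV hΩ1 a) (eV hΩ1 b) : ℂ) = ftInd Ω (a - b) := by
  rw [inner_eV_left hΩ1]
  have h : ∫ x in Ω, expChar (-a) x * (eV hΩ1 b) x
      = ∫ x in Ω, expChar (b - a) x := by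
    apply integral_congr_ae
    filter_upwards [(memL2_expChar hΩ1 b).coeFn_toLp] with x hx
    rw [eV, hx, ← expChar_add]
    congr 1
    abel
  rw [h, setIntegral_expChar hΩm, neg_sub]

lemma inner_eV_self (hΩm : MeasurableSet Ω) (hΩ1 : volume Ω = 1)
    (x : EuclideanSpace ℝ (Fin d)) :
    (inner ℂ (eV hΩ1 x) (eV hΩ1 x) : ℂ) = 1 := by
  rw [inner_eV hΩm hΩ1, sub_self, ftInd_zero hΩm hΩ1]

lemma parseval_ennreal {ι H : Type*} [NormedAddCommGroup H] [InnerProductSpace ℂ H]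
    [CompleteSpace H] (b : HilbertBasis ι ℂ H) (g : H) :
    ∑' i, ENNReal.ofReal (‖(inner ℂ (b i) g : ℂ)‖ ^ 2)
      = ENNReal.ofReal (Complex.re (inner ℂ g g : ℂ)) := by
  have h := b.hasSum_inner_mul_inner g g
  have h2 : HasSum (fun i => (‖(inner ℂ (b i) g : ℂ)‖ ^ 2 : ℝ))
      (Complex.re (inner ℂ g g : ℂ)) := by
    have h3 := h.mapL Complex.reCLM
    convert h3 using 2 with i
    rw [← inner_conj_symm (b i) g, Complex.mul_conj]
    rw [Complex.reCLM_apply, Complex.ofReal_re, RCLike.norm_conj, Complex.normSq_eq_norm_sq]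
    rw [Complex.reCLM_apply]
  rw [← h2.tsum_eq, ← ENNReal.ofReal_tsum_of_nonneg (fun i => sq_nonneg _) h2.summable]

lemma orthonormal_eV (hΩm : MeasurableSet Ω) (hΩ1 : volume Ω = 1)
    {Λ : Set (EuclideanSpace ℝ (Fin d))}
    (h : ∀ l ∈ Λ, ∀ m ∈ Λ, l ≠ m → ftInd Ω (l - m) = 0) :
    Orthonormal ℂ (fun l : Λ => eV hΩ1 (l : EuclideanSpace ℝ (Fin d))) := by
  rw [orthonormal_iff_ite]
  intro l m
  rw [inner_eV hΩm hΩ1]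
  by_cases he : l = m
  · subst he
    rw [sub_self, ftInd_zero hΩm hΩ1, if_pos rfl]
  · rw [if_neg he]
    exact h l l.2 m m.2 (fun hc => he (Subtype.ext hc))

lemma innerL_flip (d : ℕ) :
    (innerₗ (EuclideanSpace ℝ (Fin d))).flip = innerₗ (EuclideanSpace ℝ (Fin d)) := by
  apply LinearMap.ext; intro x; apply LinearMap.ext; intro y
  simp only [LinearMap.flip_apply, innerₗ_apply_apply]
  exact real_inner_comm x y

/-- A smooth compactly supported function as a Schwartz map. -/
def toSchwartz {V : Type*} [NormedAddCommGroup V] [InnerProductSpace ℝ V]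
    (φ : V → ℂ) (hs : ContDiff ℝ ∞ φ) (hc : HasCompactSupport φ) : SchwartzMap V ℂ :=
  { toFun := φ
    smooth' := hs
    decay' := by
      intro k n
      have hcont : Continuous fun x => ‖x‖ ^ k * ‖iteratedFDeriv ℝ n φ x‖ :=
        ((continuous_norm.pow k).mul ((hs.continuous_iteratedFDeriv (by
          exact_mod_cast le_top : (n : WithTop ℕ∞) ≤ (∞ : WithTop ℕ∞))).norm))
      have hsupp : HasCompactSupport fun x => ‖x‖ ^ k * ‖iteratedFDeriv ℝ n φ x‖ := by
        apply HasCompactSupport.mul_left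
        exact (hc.iteratedFDeriv n).norm
      obtain ⟨C, hC⟩ := hsupp.exists_bound_of_continuous hcont
      refine ⟨C, fun x => ?_⟩
      calc ‖x‖ ^ k * ‖iteratedFDeriv ℝ n φ x‖
          ≤ ‖‖x‖ ^ k * ‖iteratedFDeriv ℝ n φ x‖‖ := le_abs_self _
        _ ≤ C := hC x }

/-- Injectivity of the Fourier transform on `L¹`. -/
lemma ae_eq_zero_of_fourier_eq_zero {g : EuclideanSpace ℝ (Fin d) → ℂ}
    (hg : Integrable g) (h : ∀ x, 𝓕 g x = 0) : g =ᵐ[volume] 0 := by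
  apply ae_eq_zero_of_integral_contDiff_smul_eq_zero hg.locallyIntegrable
  intro φ hφ hφc
  set Φ : EuclideanSpace ℝ (Fin d) → ℂ := fun x => (φ x : ℂ) with hΦdef
  have hΦcont : Continuous Φ := Complex.continuous_ofReal.comp hφ.continuous
  have hΦsupp : HasCompactSupport Φ := hφc.comp_left (g := fun r : ℝ => (r : ℂ)) rfl
  have hΦint : Integrable Φ := hΦcont.integrable_of_hasCompactSupport hΦsupp
  have hΦsmooth : ContDiff ℝ ∞ Φ := Complex.ofRealCLM.contDiff.comp hφ
  have hFint : Integrable (𝓕 Φ) := by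
    have h1 : Integrable (⇑(SchwartzMap.fourierTransformCLM ℂ
        (toSchwartz Φ hΦsmooth hΦsupp))) volume := SchwartzMap.integrable _
    rwa [SchwartzMap.fourierTransformCLM_apply] at h1
  have hΨint : Integrable (𝓕⁻ Φ) := by
    have e0 : 𝓕⁻ Φ = fun w => 𝓕 Φ (-w) :=
      funext (Real.fourierInv_eq_fourier_neg Φ)
    rw [e0]
    exact hFint.comp_neg
  have hinv : 𝓕 (𝓕⁻ Φ) = Φ := hΦcont.fourier_fourierInv_eq hΦint hFint
  have hmult := VectorFourier.integral_fourierIntegral_smul_eq_flip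
    (L := innerₗ (EuclideanSpace ℝ (Fin d))) Real.continuous_fourierChar
    continuous_inner hΨint hg
  rw [innerL_flip] at hmult
  have key : ∫ x, Φ x • g x = 0 := by
    have e1 : (fun ξ => Φ ξ • g ξ) = fun ξ => (VectorFourier.fourierIntegral 𝐞 volume
        (innerₗ (EuclideanSpace ℝ (Fin d))) (𝓕⁻ Φ) ξ) • g ξ := by
      funext ξ
      rw [show VectorFourier.fourierIntegral 𝐞 volume
        (innerₗ (EuclideanSpace ℝ (Fin d))) (𝓕⁻ Φ) ξ = 𝓕 (𝓕⁻ Φ) ξ from rfl, hinv]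
    rw [show (∫ x, Φ x • g x) = ∫ ξ, (VectorFourier.fourierIntegral 𝐞 volume
        (innerₗ (EuclideanSpace ℝ (Fin d))) (𝓕⁻ Φ) ξ) • g ξ from by rw [← e1], hmult]
    have e2 : (fun x => (𝓕⁻ Φ) x • VectorFourier.fourierIntegral 𝐞 volume
        (innerₗ (EuclideanSpace ℝ (Fin d))) g x) = fun _ => (0 : ℂ) := by
      funext x
      rw [show VectorFourier.fourierIntegral 𝐞 volume
        (innerₗ (EuclideanSpace ℝ (Fin d))) g x = 𝓕 g x from rfl, h, smul_zero]
    rw [show (∫ x, (𝓕⁻ Φ : EuclideanSpace ℝ (Fin d) → ℂ) x • VectorFourier.fourierIntegral 𝐞 volume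
        (innerₗ (EuclideanSpace ℝ (Fin d))) g x) = ∫ _, (0 : ℂ) from by rw [e2],
      integral_zero]
  have efin : (fun x => φ x • g x) = fun x => Φ x • g x := by
    funext x
    rw [Complex.real_smul, smul_eq_mul]
  rw [efin]
  exact key

end SpecTile

set_option maxHeartbeats 4000000 in
/-- `Λ` is a spectrum of `Ω` (the exponentials `E_Λ` form an orthonormal basis of `L²(Ω)`)
if and only if `∑_{λ∈Λ} |𝓕1_Ω(x-λ)|² = 1` for every `x`, i.e. `|𝓕1_Ω|² + Λ` tiles `ℝ^d`
at level 1. -/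
theorem spectrum_iff_tiling {d : ℕ} (Ω : Set (EuclideanSpace ℝ (Fin d)))
    (hΩm : MeasurableSet Ω) (hΩ1 : volume Ω = 1)
    (Λ : Set (EuclideanSpace ℝ (Fin d))) (hΛ : Λ.Countable) :
    isSpectrum Ω Λ ↔
    (∀ x : EuclideanSpace ℝ (Fin d),
      ∑' l : Λ, ENNReal.ofReal (‖ftInd Ω (x - (l : EuclideanSpace ℝ (Fin d)))‖ ^ 2) = 1) := by
  classical
  haveI : IsFiniteMeasure (volume.restrict Ω) := SpecTile.isFinite_restrict hΩ1
  set eΛ : Λ → Lp ℂ 2 (volume.restrict Ω) :=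
    fun l => SpecTile.eV hΩ1 (l : EuclideanSpace ℝ (Fin d)) with heΛ
  constructor
  · rintro ⟨hON0, hComp⟩
    have hvan : ∀ l ∈ Λ, ∀ m ∈ Λ, l ≠ m → ftInd Ω (l - m) = 0 := by
      intro l hl m hm hne
      have h1 := hON0 m hm l hl
      rw [SpecTile.integral_expChar_mul_conj hΩm, if_neg (fun hc => hne hc.symm)] at h1
      exact h1
    have hON : Orthonormal ℂ eΛ := SpecTile.orthonormal_eV hΩm hΩ1 hvan
    have horth : (Submodule.span ℂ (Set.range eΛ))ᗮ = ⊥ := by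
      rw [Submodule.eq_bot_iff]
      intro F hF
      have hFl : ∀ l : Λ, (inner ℂ (eΛ l) F : ℂ) = 0 := fun l =>
        (Submodule.mem_orthogonal _ F).1 hF _ (Submodule.subset_span ⟨l, rfl⟩)
      have hz : (⇑F) =ᵐ[volume.restrict Ω] 0 := by
        apply hComp (⇑F) (MeasureTheory.Lp.memLp F)
        intro l hl
        have h2 := hFl ⟨l, hl⟩
        rw [heΛ, SpecTile.inner_eV_left hΩ1] at h2
        rw [← h2]
        apply integral_congr_ae
        filter_upwards with x
        rw [SpecTile.conj_expChar, mul_comm]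
      exact (MeasureTheory.Lp.eq_zero_iff_ae_eq_zero).2 hz
    have hsp : ⊤ ≤ (Submodule.span ℂ (Set.range eΛ)).topologicalClosure :=
      (Submodule.topologicalClosure_eq_top_iff.2 horth).ge
    let b : HilbertBasis Λ ℂ (Lp ℂ 2 (volume.restrict Ω)) := HilbertBasis.mk hON hsp
    intro x
    have hP := SpecTile.parseval_ennreal b (SpecTile.eV hΩ1 x)
    rw [SpecTile.inner_eV_self hΩm hΩ1, Complex.one_re, ENNReal.ofReal_one] at hP
    rw [← hP]
    apply tsum_congr
    intro l
    congr 1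
    have hb : b l = eΛ l := congrFun (HilbertBasis.coe_mk hON hsp) l
    rw [hb, heΛ, SpecTile.inner_eV hΩm hΩ1, ← neg_sub (l : EuclideanSpace ℝ (Fin d)) x,
      SpecTile.norm_ftInd_neg hΩm]
  · intro hT
    have hvan : ∀ l ∈ Λ, ∀ m ∈ Λ, l ≠ m → ftInd Ω (l - m) = 0 := by
      intro l hl m hm hne
      have h1 := hT l
      rw [ENNReal.tsum_eq_add_tsum_ite (⟨l, hl⟩ : Λ)] at h1
      have hterm : ENNReal.ofReal
          (‖ftInd Ω (l - ((⟨l, hl⟩ : Λ) : EuclideanSpace ℝ (Fin d)))‖ ^ 2) = 1 := by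
        rw [show l - ((⟨l, hl⟩ : Λ) : EuclideanSpace ℝ (Fin d)) = 0 from sub_self l,
          SpecTile.ftInd_zero hΩm hΩ1]
        norm_num
      rw [hterm] at h1
      have hrest := (ENNReal.add_right_inj ENNReal.one_ne_top).1
        (h1.trans (add_zero (1 : ℝ≥0∞)).symm)
      have h3 := ENNReal.tsum_eq_zero.1 hrest ⟨m, hm⟩
      rw [if_neg (fun hc => hne (Subtype.mk_eq_mk.mp hc).symm)] at h3
      have h4 : ‖ftInd Ω (l - m)‖ ^ 2 ≤ 0 := ENNReal.ofReal_eq_zero.1 h3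
      have h5 : ‖ftInd Ω (l - m)‖ ^ 2 = 0 := le_antisymm h4 (sq_nonneg _)
      rwa [pow_eq_zero_iff (by norm_num), norm_eq_zero] at h5
    have hON : Orthonormal ℂ eΛ := SpecTile.orthonormal_eV hΩm hΩ1 hvan
    constructor
    · intro l hl m hm
      rw [SpecTile.integral_expChar_mul_conj hΩm]
      by_cases he : l = m
      · subst he
        rw [sub_self, SpecTile.ftInd_zero hΩm hΩ1, if_pos rfl]
      · rw [if_neg he, hvan m hm l hl (Ne.symm he)]
    · intro f hf hf0
      obtain ⟨w, b, hsw, hbc⟩ := hON.toSubtypeRange.exists_hilbertBasis_extension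
      set F : Lp ℂ 2 (volume.restrict Ω) := hf.toLp f with hFdef
      have hcoef : ∀ l : Λ, (inner ℂ (eΛ l) F : ℂ) = 0 := by
        intro l
        rw [heΛ, SpecTile.inner_eV_left hΩ1, ← hf0 l l.2]
        apply integral_congr_ae
        filter_upwards [hf.coeFn_toLp] with x hx
        rw [hx, SpecTile.conj_expChar, mul_comm]
      have hjmem : ∀ l : Λ, eΛ l ∈ w := fun l => hsw ⟨l, rfl⟩
      set j : Λ → ↥w := fun l => ⟨eΛ l, hjmem l⟩ with hjdef
      have hinj : Function.Injective j := by
        intro a b' hab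
        exact hON.linearIndependent.injective (congrArg Subtype.val hab)
      have hout : ∀ (x : EuclideanSpace ℝ (Fin d)) (u : ↥w), u ∉ Set.range j →
          (inner ℂ (b u) (SpecTile.eV hΩ1 x) : ℂ) = 0 := by
        intro x u hu
        have hP := SpecTile.parseval_ennreal b (SpecTile.eV hΩ1 x)
        rw [SpecTile.inner_eV_self hΩm hΩ1, Complex.one_re, ENNReal.ofReal_one] at hP
        have hrange : (∑' (u : Set.range j), ENNReal.ofReal
            (‖(inner ℂ (b (u : ↥w)) (SpecTile.eV hΩ1 x) : ℂ)‖ ^ 2)) = 1 := by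
          rw [← (Equiv.ofInjective j hinj).tsum_eq (fun u : Set.range j =>
            ENNReal.ofReal (‖(inner ℂ (b (u : ↥w)) (SpecTile.eV hΩ1 x) : ℂ)‖ ^ 2))]
          rw [← hT x]
          apply tsum_congr
          intro l
          congr 1
          have hbj : b ((Equiv.ofInjective j hinj l : Set.range j) : ↥w) = eΛ l := by
            rw [hbc]
            rfl
          rw [hbj, heΛ, SpecTile.inner_eV hΩm hΩ1,
            ← neg_sub (l : EuclideanSpace ℝ (Fin d)) x, SpecTile.norm_ftInd_neg hΩm]
        have hsplit := Summable.tsum_add_tsum_compl (s := Set.range j)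
          (f := fun u : ↥w => ENNReal.ofReal (‖(inner ℂ (b u) (SpecTile.eV hΩ1 x) : ℂ)‖ ^ 2))
          ENNReal.summable ENNReal.summable
        rw [hrange, hP] at hsplit
        have hcompl := (ENNReal.add_right_inj ENNReal.one_ne_top).1
          (hsplit.trans (add_zero (1 : ℝ≥0∞)).symm)
        have h3 := ENNReal.tsum_eq_zero.1 hcompl ⟨u, hu⟩
        have h4 : ‖(inner ℂ (b u) (SpecTile.eV hΩ1 x) : ℂ)‖ ^ 2 = 0 :=
          le_antisymm (ENNReal.ofReal_eq_zero.1 h3) (sq_nonneg _)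
        rwa [pow_eq_zero_iff (by norm_num), norm_eq_zero] at h4
      have hFzero : ∀ x : EuclideanSpace ℝ (Fin d),
          (inner ℂ (SpecTile.eV hΩ1 x) F : ℂ) = 0 := by
        intro x
        rw [← b.tsum_inner_mul_inner (SpecTile.eV hΩ1 x) F]
        have hz : (fun u : ↥w => (inner ℂ (SpecTile.eV hΩ1 x) (b u) : ℂ)
            * (inner ℂ (b u) F : ℂ)) = fun _ => 0 := by
          funext u
          by_cases hu : u ∈ Set.range j
          · obtain ⟨l, rfl⟩ := hu
            have hb1 : b (j l) = eΛ l := by rw [hbc]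
            rw [hb1, hcoef l, mul_zero]
          · have h0 : (inner ℂ (b u) (SpecTile.eV hΩ1 x) : ℂ) = 0 := hout x u hu
            have h1 : (inner ℂ (SpecTile.eV hΩ1 x) (b u) : ℂ) = 0 := by
              rw [← inner_conj_symm, h0, map_zero]
            rw [h1, zero_mul]
        rw [hz, tsum_zero]
      set G : EuclideanSpace ℝ (Fin d) → ℂ := Ω.indicator f with hGdef
      have hGint : Integrable G := by
        rw [hGdef, integrable_indicator_iff hΩm]
        exact (hf.mono_exponent (by norm_num)).integrable le_rfl
      have hFour : ∀ x, 𝓕 G x = 0 := by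
        intro x
        have e1 : 𝓕 G x = ∫ v in Ω, expChar (-x) v * f v := by
          rw [Real.fourier_eq, ← integral_indicator hΩm]
          congr 1
          funext v
          by_cases hv : v ∈ Ω
          · simp only [hGdef, Set.indicator_of_mem hv]
            rw [SpecTile.fourierChar_smul]
          · simp [hGdef, Set.indicator_of_notMem hv]
        rw [e1]
        have h2 := hFzero x
        rw [SpecTile.inner_eV_left hΩ1] at h2
        rw [← h2]
        apply integral_congr_ae
        filter_upwards [hf.coeFn_toLp] with v hv
        rw [hv]
      have hG0 : G =ᵐ[volume] 0 := SpecTile.ae_eq_zero_of_fourier_eq_zero hGint hFour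
      have h1 : G =ᵐ[volume.restrict Ω] f := indicator_ae_eq_restrict hΩm
      exact h1.symm.trans (ae_restrict_of_ae hG0)
end
end

section
/- Let Ω ⊆ ℝ^d be measurable of measure 1, let D ⊆ ℝ^d be an open orthogonal packing region for Ω, and let Λ ⊆ ℝ^d be countable such that the exponentials E_Λ = {e_λ : λ ∈ Λ} are pairwise orthogonal in L²(Ω). Then D + Λ is a packing of ℝ^d; in fact (Λ−Λ) ∩ (D−D) = {0}, so the translates D+λ, λ ∈ Λ, are pairwise disjoint. -/
open MeasureTheory Real Complex Filter Topology Metric Set Bornology ComplexConjugate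
open scoped FourierTransform ENNReal RealInnerProductSpace ContDiff Classical Pointwise

noncomputable section

/-- If `D` is an open orthogonal packing region for `Ω` (that is,
`(D-D) ∩ Z(𝓕1_Ω) = ∅`) and the exponentials `e_λ`, `λ ∈ Λ`, are pairwise orthogonal
in `L²(Ω)`, then `D + Λ` is a packing of `ℝ^d`; in fact `(Λ-Λ) ∩ (D-D)` contains only
`0`, so the translates `D + λ`, `λ ∈ Λ`, are pairwise disjoint. -/
theorem packing_region_packs {d : ℕ} (Ω D : Set (EuclideanSpace ℝ (Fin d)))
    (hΩm : MeasurableSet Ω) (hΩ1 : volume Ω = 1)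
    (hD : IsOpen D)
    (hopr : (D - D) ∩ {ξ | ftInd Ω ξ = 0} = ∅)
    (Λ : Set (EuclideanSpace ℝ (Fin d))) (hΛ : Λ.Countable)
    (horth : ∀ l ∈ Λ, ∀ m ∈ Λ, l ≠ m →
      (∫ x in Ω, expChar l x * conj (expChar m x)) = 0) :
    packs (D.indicator fun _ => (1 : ℝ)) Λ ∧
    (Λ - Λ) ∩ (D - D) ⊆ {0} ∧
    (∀ l ∈ Λ, ∀ m ∈ Λ, l ≠ m →
      Disjoint ((fun x => l + x) '' D) ((fun x => m + x) '' D)) := by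
  -- Step 1: for distinct l, m ∈ Λ, the FT of 1_Ω vanishes at l - m.
  have key : ∀ l ∈ Λ, ∀ m ∈ Λ, l ≠ m → l - m ∉ D - D := by
    intro l hl m hm hne hmem
    have hzero : ftInd Ω (l - m) = 0 := by
      have h1 : conj (ftInd Ω (l - m)) = ∫ x in Ω, expChar (l - m) x := by
        rw [ftInd, Real.fourier_eq', ← integral_conj, ← integral_indicator hΩm]
        congr 1
        funext x
        by_cases hx : x ∈ Ω
        · simp only [Set.indicator_of_mem hx, smul_eq_mul, mul_one, ← Complex.exp_conj,
            expChar]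
          congr 1
          simp [Complex.ext_iff, real_inner_comm x (l - m)]
        · simp [Set.indicator_of_notMem hx]
      have h2 : (∫ x in Ω, expChar l x * conj (expChar m x))
          = ∫ x in Ω, expChar (l - m) x := by
        apply integral_congr_ae
        filter_upwards with x
        simp only [expChar, ← Complex.exp_conj]
        rw [← Complex.exp_add]
        congr 1
        simp [Complex.ext_iff, inner_sub_left]
        ring
      have : conj (ftInd Ω (l - m)) = 0 := by
        rw [h1, ← h2, horth l hl m hm hne]
      simpa using congrArg conj this
    have : l - m ∈ (D - D) ∩ {ξ | ftInd Ω ξ = 0} := ⟨hmem, hzero⟩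
    rw [hopr] at this
    exact this
  -- Step 2: (Λ - Λ) ∩ (D - D) ⊆ {0}
  have sub2 : (Λ - Λ) ∩ (D - D) ⊆ {0} := by
    rintro v ⟨hv1, hv2⟩
    obtain ⟨l, hl, m, hm, rfl⟩ := Set.mem_sub.mp hv1
    by_cases hlm : l = m
    · simp [hlm]
    · exact absurd hv2 (key l hl m hm hlm)
  refine ⟨?_, sub2, ?_⟩
  · -- packing
    apply Filter.Eventually.of_forall
    intro x
    by_cases hex : ∃ l : Λ, x - (l : EuclideanSpace ℝ (Fin d)) ∈ D
    · obtain ⟨l0, hl0⟩ := hex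
      have huniq : ∀ m : Λ, m ≠ l0 →
          ENNReal.ofReal (D.indicator (fun _ => (1:ℝ)) (x - (m : EuclideanSpace ℝ (Fin d)))) = 0 := by
        intro m hm
        by_cases hxm : x - (m : EuclideanSpace ℝ (Fin d)) ∈ D
        · exfalso
          have hdd : (l0 : EuclideanSpace ℝ (Fin d)) - m ∈ D - D := by
            have := Set.sub_mem_sub hxm hl0
            simpa using this
          have hll : (l0 : EuclideanSpace ℝ (Fin d)) - m ∈ Λ - Λ :=
            Set.sub_mem_sub l0.2 m.2
          have := sub2 ⟨hll, hdd⟩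
          have : (l0 : EuclideanSpace ℝ (Fin d)) = m := by
            simpa [sub_eq_zero] using this
          exact hm (Subtype.ext this.symm)
        · simp [Set.indicator_of_notMem hxm]
      rw [tsum_eq_single l0 huniq]
      simp [Set.indicator_of_mem hl0]
    · push_neg at hex
      have : ∀ l : Λ,
          ENNReal.ofReal (D.indicator (fun _ => (1:ℝ)) (x - (l : EuclideanSpace ℝ (Fin d)))) = 0 := by
        intro l
        simp [Set.indicator_of_notMem (hex l)]
      rw [tsum_congr this]
      simp
  · -- disjointness
    intro l hl m hm hne
    rw [Set.disjoint_left]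
    rintro y ⟨a, ha, rfl⟩ ⟨b, hb, hy⟩
    have hdd : l - m ∈ D - D := by
      have : l - m = b - a := by
        rw [sub_eq_sub_iff_add_eq_add]
        exact hy.symm.trans (add_comm m b)
      rw [this]; exact Set.sub_mem_sub hb ha
    have hll : l - m ∈ Λ - Λ := Set.sub_mem_sub hl hm
    have := sub2 ⟨hll, hdd⟩
    have : l = m := by simpa [sub_eq_zero] using this
    exact hne this
end
end

section
/- Let f : ℝ^d → ℝ be nonnegative and integrable with 𝓕f infinitely differentiable, let Λ ⊆ ℝ^d be a discrete set of uniformly bounded density, and suppose f + Λ is a tiling of ℝ^d at some level ℓ (i.e., ∑_{λ∈Λ} f(x−λ) = ℓ for a.e. x). Then for every smooth compactly supported φ : ℝ^d → ℂ whose support is disjoint from {ξ : 𝓕f(ξ) = 0} ∪ {0}, one has ∑_{λ∈Λ} 𝓕φ(λ) = 0 (the series converging absolutely). -/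
open MeasureTheory Real Complex Filter Topology Metric Set Bornology ComplexConjugate
open scoped FourierTransform ENNReal RealInnerProductSpace ContDiff Classical Pointwise

noncomputable section

/-- `Λ` has (uniformly) bounded density: there is `ρ` with
`#(Λ ∩ B_R(x)) ≤ ρ·|B_R(x)|` for all `x` and all `R > 1`. -/
def boundedDensity {d : ℕ} (Λ : Set (EuclideanSpace ℝ (Fin d))) : Prop :=
  ∃ ρ : ℝ, ∀ (x : EuclideanSpace ℝ (Fin d)) (R : ℝ), 1 < R →
    (Λ ∩ Metric.ball x R).Finite ∧
    (Nat.card ↥(Λ ∩ Metric.ball x R) : ℝ) ≤ ρ * (volume (Metric.ball x R)).toReal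

/-- If `f ≥ 0` is integrable with `𝓕f` infinitely differentiable, `Λ` is of uniformly
bounded density, and `f + Λ` tiles `ℝ^d` at some level `ℓ`, then
`supp 𝓕δ_Λ ⊆ {𝓕f = 0} ∪ {0}`: for every smooth compactly supported `φ` whose support
avoids `{𝓕f = 0} ∪ {0}` one has `∑_{λ∈Λ} 𝓕φ(λ) = 0`, the series converging absolutely. -/
theorem tiling_implies_support_smooth {d : ℕ}
    (f : EuclideanSpace ℝ (Fin d) → ℝ)
    (hf0 : ∀ x, 0 ≤ f x) (hfi : Integrable f)
    (hsm : ContDiff ℝ ∞ (ftR f))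
    (Λ : Set (EuclideanSpace ℝ (Fin d))) (hbd : boundedDensity Λ)
    (ℓ : ℝ) (htile : tilesAt f Λ ℓ) :
    ∀ φ : EuclideanSpace ℝ (Fin d) → ℂ, ContDiff ℝ ∞ φ → HasCompactSupport φ →
      Disjoint (tsupport φ) ({ξ | ftR f ξ = 0} ∪ {0}) →
      Summable (fun l : Λ => ‖𝓕 φ (l : EuclideanSpace ℝ (Fin d))‖) ∧
      ∑' l : Λ, 𝓕 φ (l : EuclideanSpace ℝ (Fin d)) = 0 := by
  intro φ hφsm hφcs hdisj
  have htile' : ∀ᵐ x : EuclideanSpace ℝ (Fin d),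
      ∑' l : Λ, ENNReal.ofReal (f (x - (l : EuclideanSpace ℝ (Fin d)))) = ENNReal.ofReal ℓ :=
    htile
  have hbd' : ∃ ρ : ℝ, ∀ (x : EuclideanSpace ℝ (Fin d)) (R : ℝ), 1 < R →
      (Λ ∩ Metric.ball x R).Finite ∧
      (Nat.card ↥(Λ ∩ Metric.ball x R) : ℝ) ≤ ρ * (volume (Metric.ball x R)).toReal := hbd
  have hΛc : Λ.Countable := by
    obtain ⟨ρ, hρ⟩ := hbd'
    have hsub : Λ ⊆ ⋃ n : ℕ, (Λ ∩ Metric.ball 0 (n + 2)) := by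
      intro x hx
      obtain ⟨n, hn⟩ := exists_nat_gt (dist x 0)
      refine Set.mem_iUnion.2 ⟨n, hx, ?_⟩
      rw [Metric.mem_ball]
      linarith
    refine ((Set.countable_iUnion fun n : ℕ => ?_)).mono hsub
    have h2 : (1 : ℝ) < (n : ℝ) + 2 := by
      have : (0 : ℝ) ≤ (n : ℝ) := Nat.cast_nonneg n
      linarith
    exact (hρ 0 ((n : ℝ) + 2) h2).1.countable
  haveI : Countable ↥Λ := hΛc.to_subtype
  have hcont : Continuous (ftR f) := hsm.continuous
  have hzero : ∀ ξ, ftR f ξ = 0 → φ ξ = 0 := by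
    intro ξ h
    by_contra hne
    exact Set.disjoint_left.mp hdisj (subset_tsupport φ (Function.mem_support.2 hne)) (Or.inl h)
  have hφ0 : φ 0 = 0 := by
    by_contra hne
    exact Set.disjoint_left.mp hdisj (subset_tsupport φ (Function.mem_support.2 hne)) (Or.inr rfl)
  set g : EuclideanSpace ℝ (Fin d) → ℂ := fun ξ => if ftR f ξ = 0 then 0 else φ ξ / ftR f ξ
    with hg_def
  have hgφ : ∀ ξ, g ξ * ftR f ξ = φ ξ := by
    intro ξ
    by_cases h : ftR f ξ = 0
    · simp [hg_def, h, hzero ξ h]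
    · simp [hg_def, h, div_mul_cancel₀ _ h]
  have hg_of_phi_zero : ∀ ξ, φ ξ = 0 → g ξ = 0 := fun ξ h => by
    by_cases hz : ftR f ξ = 0 <;> simp [hg_def, hz, h]
  have hg_supp : Function.support g ⊆ tsupport φ := fun ξ hξ => by
    by_contra h
    exact hξ (hg_of_phi_zero ξ (image_eq_zero_of_notMem_tsupport h))
  have hg_cs : HasCompactSupport g := hφcs.mono' hg_supp
  have hg_sm : ContDiff ℝ ∞ g := by
    rw [contDiff_iff_contDiffAt]
    intro x
    by_cases hx : ftR f x = 0
    · have hxn : x ∉ tsupport φ := fun hmem => Set.disjoint_left.mp hdisj hmem (Or.inl hx)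
      have hev : ∀ᶠ ξ in 𝓝 x, (0 : ℂ) = g ξ := by
        filter_upwards [(isClosed_tsupport φ).isOpen_compl.mem_nhds hxn] with ξ hξ
        exact (hg_of_phi_zero ξ (image_eq_zero_of_notMem_tsupport hξ)).symm
      exact contDiffAt_const.congr_of_eventuallyEq (hev.mono fun ξ h => h.symm)
    · have hev : ∀ᶠ ξ in 𝓝 x, ftR f ξ ≠ 0 := hcont.continuousAt.eventually_ne hx
      have hev2 : g =ᶠ[𝓝 x] fun ξ => φ ξ / ftR f ξ := by
        filter_upwards [hev] with ξ h
        simp [hg_def, h]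
      have : ContDiffAt ℝ ∞ (fun ξ => φ ξ / ftR f ξ) x := by
        simp only [div_eq_mul_inv]
        exact hφsm.contDiffAt.mul (hsm.contDiffAt.inv hx)
      exact this.congr_of_eventuallyEq hev2
  have hg0 : g 0 = 0 := hg_of_phi_zero 0 hφ0
  -- Schwartz map structure on g
  let gS : SchwartzMap (EuclideanSpace ℝ (Fin d)) ℂ :=
    { toFun := g
      smooth' := hg_sm
      decay' := by
        intro k n
        have hc : Continuous fun x : EuclideanSpace ℝ (Fin d) =>
            ‖x‖ ^ k * ‖iteratedFDeriv ℝ n g x‖ :=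
          (continuous_norm.pow k).mul (hg_sm.continuous_iteratedFDeriv (mod_cast le_top)).norm
        have hcs : HasCompactSupport fun x : EuclideanSpace ℝ (Fin d) =>
            ‖x‖ ^ k * ‖iteratedFDeriv ℝ n g x‖ :=
          ((hg_cs.iteratedFDeriv n).norm).mul_left
        obtain ⟨C, hC⟩ := hcs.exists_bound_of_continuous hc
        exact ⟨C, fun x => (le_abs_self _).trans (Real.norm_eq_abs _ ▸ hC x)⟩ }
  have hgS : ⇑gS = g := rfl
  have hg_int : Integrable g := by simpa [hgS] using gS.integrable
  set ψ : EuclideanSpace ℝ (Fin d) → ℂ := 𝓕 g with hψ_def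
  have hψ_int : Integrable ψ := by
    simpa [hgS, SchwartzMap.fourier_coe] using (SchwartzMap.fourierTransformCLM ℂ gS).integrable
  have hψ_cont : Continuous ψ := by
    have := (SchwartzMap.fourierTransformCLM ℂ gS).continuous
    simpa [hgS, SchwartzMap.fourier_coe] using this
  have hψ_integral : ∫ x, ψ x = 0 := by
    have hinv : 𝓕⁻ (𝓕 g) = g := hg_sm.continuous.fourierInv_fourier_eq hg_int hψ_int
    have h0 : 𝓕⁻ ψ 0 = ∫ x, ψ x := by
      rw [Real.fourierInv_eq']
      simp
    rw [← h0, hψ_def, hinv, hg0]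
  have hfc : Integrable (fun x : EuclideanSpace ℝ (Fin d) => (f x : ℂ)) := hfi.ofReal
  have hflipL : (innerₗ (EuclideanSpace ℝ (Fin d))).flip = innerₗ (EuclideanSpace ℝ (Fin d)) := by
    apply LinearMap.ext; intro x; apply LinearMap.ext; intro y
    exact real_inner_comm x y
  have key : ∀ l : EuclideanSpace ℝ (Fin d),
      𝓕 φ l = ∫ x, (f (x - l) : ℂ) * ψ x := by
    intro l
    set h : EuclideanSpace ℝ (Fin d) → ℂ :=
      fun ξ => Complex.exp (((-2 * π * ⟪ξ, l⟫ : ℝ) : ℂ) * Complex.I) * g ξ with hh_def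
    have hh_int : Integrable h := by
      apply hg_int.bdd_mul (c := 1)
      · have hc : Continuous fun ξ : EuclideanSpace ℝ (Fin d) =>
            ((-2 * π * ⟪ξ, l⟫ : ℝ) : ℂ) * Complex.I :=
          (Complex.continuous_ofReal.comp (continuous_const.mul
            (continuous_inner.comp (continuous_id.prodMk continuous_const)))).mul
            continuous_const
        exact (Complex.continuous_exp.comp hc).aestronglyMeasurable
      · refine Filter.Eventually.of_forall (fun ξ => ?_)
        rw [Complex.norm_exp_ofReal_mul_I]
    have hFh : ∀ x, 𝓕 h x = ψ (x + l) := by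
      intro x
      rw [hψ_def, Real.fourier_eq', Real.fourier_eq']
      congr 1 with ξ
      rw [smul_eq_mul, smul_eq_mul, hh_def, ← mul_assoc, ← Complex.exp_add]
      congr 2
      push_cast [inner_add_right]
      ring
    have flip := VectorFourier.integral_fourierIntegral_smul_eq_flip
      (L := innerₗ (EuclideanSpace ℝ (Fin d))) Real.continuous_fourierChar
      continuous_inner hfc hh_int
    rw [hflipL] at flip
    calc 𝓕 φ l = ∫ ξ, (VectorFourier.fourierIntegral 𝐞 volume
          (innerₗ (EuclideanSpace ℝ (Fin d))) (fun x => (f x : ℂ)) ξ) • h ξ := by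
          rw [Real.fourier_eq']
          congr 1 with ξ
          have hft : VectorFourier.fourierIntegral 𝐞 volume
              (innerₗ (EuclideanSpace ℝ (Fin d))) (fun x => (f x : ℂ)) ξ = ftR f ξ := rfl
          rw [hft, hh_def, smul_eq_mul, smul_eq_mul]
          calc Complex.exp (((-2 * π * ⟪ξ, l⟫ : ℝ) : ℂ) * Complex.I) • φ ξ
              = Complex.exp (((-2 * π * ⟪ξ, l⟫ : ℝ) : ℂ) * Complex.I) * (g ξ * ftR f ξ) := by
                rw [hgφ ξ, smul_eq_mul]
            _ = ftR f ξ * (Complex.exp (((-2 * π * ⟪ξ, l⟫ : ℝ) : ℂ) * Complex.I) * g ξ) := by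
                ring
      _ = ∫ x, (f x : ℂ) • (VectorFourier.fourierIntegral 𝐞 volume
            (innerₗ (EuclideanSpace ℝ (Fin d))) h x) := flip
      _ = ∫ x, (f x : ℂ) * ψ (x + l) := by
          congr 1 with x
          have : VectorFourier.fourierIntegral 𝐞 volume
              (innerₗ (EuclideanSpace ℝ (Fin d))) h x = 𝓕 h x := rfl
          rw [this, hFh x, smul_eq_mul]
      _ = ∫ x, (f (x - l) : ℂ) * ψ x := by
          rw [← integral_sub_right_eq_self (fun x => (f x : ℂ) * ψ (x + l)) l]
          congr 1 with x
          simp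
  -- the family of functions
  set F : ↥Λ → EuclideanSpace ℝ (Fin d) → ℂ :=
    fun l x => (f (x - (l : EuclideanSpace ℝ (Fin d))) : ℂ) * ψ x with hF_def
  have hFm : ∀ l : ↥Λ, AEStronglyMeasurable (F l) volume := by
    intro l
    exact ((hfc.comp_sub_right (l : EuclideanSpace ℝ (Fin d))).aestronglyMeasurable).mul
      hψ_cont.aestronglyMeasurable
  have hE : ∀ (l : ↥Λ) (x : EuclideanSpace ℝ (Fin d)),
      (‖F l x‖₊ : ℝ≥0∞) = ENNReal.ofReal (f (x - (l : EuclideanSpace ℝ (Fin d)))) * ‖ψ x‖₊ := by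
    intro l x
    rw [hF_def]
    simp only [nnnorm_mul, ENNReal.coe_mul, Complex.nnnorm_real]
    rw [← Real.enorm_eq_ofReal (hf0 _)]
    rfl
  have hT : ∑' l : ↥Λ, ∫⁻ x, (‖F l x‖₊ : ℝ≥0∞) ≠ (∞ : ℝ≥0∞) := by
    have h1 : ∀ l : ↥Λ, ∫⁻ x, (‖F l x‖₊ : ℝ≥0∞) =
        ∫⁻ x, ENNReal.ofReal (f (x - (l : EuclideanSpace ℝ (Fin d)))) * ‖ψ x‖₊ := by
      intro l; exact lintegral_congr fun x => hE l x
    have haem : ∀ l : ↥Λ, AEMeasurable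
        (fun x => ENNReal.ofReal (f (x - (l : EuclideanSpace ℝ (Fin d)))) * (‖ψ x‖₊ : ℝ≥0∞))
        volume := by
      intro l
      exact (ENNReal.measurable_ofReal.comp_aemeasurable
        ((hfi.comp_sub_right (l : EuclideanSpace ℝ (Fin d))).aemeasurable)).mul
        (hψ_cont.measurable.nnnorm.coe_nnreal_ennreal.aemeasurable)
    calc ∑' l : ↥Λ, ∫⁻ x, (‖F l x‖₊ : ℝ≥0∞)
        = ∑' l : ↥Λ, ∫⁻ x, ENNReal.ofReal (f (x - (l : EuclideanSpace ℝ (Fin d)))) * ‖ψ x‖₊ := by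
          exact tsum_congr h1
      _ = ∫⁻ x, ∑' l : ↥Λ, ENNReal.ofReal (f (x - (l : EuclideanSpace ℝ (Fin d)))) * ‖ψ x‖₊ :=
          (lintegral_tsum haem).symm
      _ = ∫⁻ x, (∑' l : ↥Λ, ENNReal.ofReal (f (x - (l : EuclideanSpace ℝ (Fin d))))) * ‖ψ x‖₊ := by
          congr 1 with x
          exact ENNReal.tsum_mul_right
      _ = ∫⁻ x, ENNReal.ofReal ℓ * ‖ψ x‖₊ := by
          refine lintegral_congr_ae (htile'.mono fun x hx => ?_)
          simp only [hx]
      _ = ENNReal.ofReal ℓ * ∫⁻ x, ‖ψ x‖₊ := lintegral_const_mul' _ _ ENNReal.ofReal_ne_top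
      _ ≠ (∞ : ℝ≥0∞) := ENNReal.mul_ne_top ENNReal.ofReal_ne_top hψ_int.2.ne
  have hkey' : ∀ l : ↥Λ, 𝓕 φ (l : EuclideanSpace ℝ (Fin d)) = ∫ x, F l x := fun l =>
    key (l : EuclideanSpace ℝ (Fin d))
  constructor
  · have hsum1 : Summable fun l : ↥Λ => (∫⁻ x, (‖F l x‖₊ : ℝ≥0∞)).toReal :=
      ENNReal.summable_toReal hT
    refine Summable.of_nonneg_of_le (fun _ => norm_nonneg _) (fun l => ?_) hsum1
    rw [hkey' l]
    refine (norm_integral_le_lintegral_norm _).trans (le_of_eq ?_)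
    congr 1
    exact lintegral_congr fun x => (ofReal_norm _)
  · have h2 : ∑' l : ↥Λ, 𝓕 φ (l : EuclideanSpace ℝ (Fin d)) = ∫ x, ∑' l : ↥Λ, F l x := by
      rw [tsum_congr hkey']
      exact (integral_tsum hFm hT).symm
    have hae : ∀ᵐ x : EuclideanSpace ℝ (Fin d),
        ∑' l : ↥Λ, F l x = (((ENNReal.ofReal ℓ).toReal : ℝ) : ℂ) * ψ x := by
      refine htile'.mono fun x hx => ?_
      have hne : ∑' l : ↥Λ, ENNReal.ofReal (f (x - (l : EuclideanSpace ℝ (Fin d)))) ≠ (∞ : ℝ≥0∞) := by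
        rw [hx]; exact ENNReal.ofReal_ne_top
      have hsR : Summable fun l : ↥Λ => f (x - (l : EuclideanSpace ℝ (Fin d))) := by
        have := ENNReal.summable_toReal hne
        refine this.congr fun l => ?_
        exact ENNReal.toReal_ofReal (hf0 _)
      have hsumR : ∑' l : ↥Λ, f (x - (l : EuclideanSpace ℝ (Fin d))) =
          (ENNReal.ofReal ℓ).toReal := by
        rw [← hx, ENNReal.tsum_toReal_eq (fun _ => ENNReal.ofReal_ne_top)]
        exact tsum_congr fun l => (ENNReal.toReal_ofReal (hf0 _)).symm
      have hsC : Summable fun l : ↥Λ => ((f (x - (l : EuclideanSpace ℝ (Fin d))) : ℝ) : ℂ) :=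
        (Complex.ofRealCLM.summable hsR)
      calc ∑' l : ↥Λ, F l x
          = (∑' l : ↥Λ, ((f (x - (l : EuclideanSpace ℝ (Fin d))) : ℝ) : ℂ)) * ψ x :=
            tsum_mul_right
        _ = (((ENNReal.ofReal ℓ).toReal : ℝ) : ℂ) * ψ x := by
            congr 1
            rw [← hsumR, Complex.ofReal_tsum]
    rw [h2, integral_congr_ae hae, integral_const_mul, hψ_integral, mul_zero]
end
end

section
/- (Keller's theorem.) Let Q = (−1/2, 1/2)^d be the open unit cube in ℝ^d and let Λ ⊆ ℝ^d with 0 ∈ Λ be such that Q + Λ is a tiling of ℝ^d at level 1. Then every nonzero λ ∈ Λ has at least one coordinate which is a nonzero integer. -/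
open MeasureTheory Real Complex Filter Topology Metric Set Bornology ComplexConjugate
open scoped FourierTransform ENNReal RealInnerProductSpace ContDiff Classical Pointwise

noncomputable section

namespace KellerProof
variable {d : ℕ}

/-- The open cube of side 1 centered at 0. -/
def kQ (d : ℕ) : Set (EuclideanSpace ℝ (Fin d)) := {x | ∀ j, |x j| < 1/2}

lemma sub_apply' (x y : EuclideanSpace ℝ (Fin d)) (j : Fin d) : (x - y) j = x j - y j := rfl

lemma mem_kQ_sub {x y : EuclideanSpace ℝ (Fin d)} : x - y ∈ kQ d ↔ ∀ j, |x j - y j| < 1/2 := by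
  simp [kQ, sub_apply']

lemma isOpen_kQ : IsOpen (kQ d) := by
  have : kQ d = ⋂ j, (fun x : EuclideanSpace ℝ (Fin d) => x j) ⁻¹' {t | |t| < 1/2} := by
    ext x; simp [kQ]
  rw [this]
  exact isOpen_iInter_of_finite fun j =>
    (isOpen_lt _root_.continuous_abs continuous_const).preimage ((continuous_apply j).comp (PiLp.continuous_ofLp 2 _))

lemma measurableSet_kQ : MeasurableSet (kQ d) := isOpen_kQ.measurableSet

variable {Λ : Set (EuclideanSpace ℝ (Fin d))}

/-- The tiling counting function for a generalized translate family `τ`. -/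
def kSum (τ : Λ → EuclideanSpace ℝ (Fin d)) (x : EuclideanSpace ℝ (Fin d)) : ℝ≥0∞ :=
  ∑' μ : Λ, (kQ d).indicator (fun _ => (1 : ℝ≥0∞)) (x - τ μ)

def kTiles (τ : Λ → EuclideanSpace ℝ (Fin d)) : Prop :=
  ∀ᵐ x : EuclideanSpace ℝ (Fin d), kSum τ x = 1

lemma measurable_kSum (hΛ : Λ.Countable) (τ : Λ → EuclideanSpace ℝ (Fin d)) :
    Measurable (kSum τ) := by
  have := hΛ.to_subtype
  exact Measurable.ennreal_tsum fun μ =>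
    ((measurable_const.indicator measurableSet_kQ).comp (measurable_id.sub_const (τ μ)))

/-- From an a.e. property and a positive measure set, get a common point. -/
lemma exists_mem_of_ae {α : Type*} [MeasurableSpace α] {μ : Measure α} {p : α → Prop}
    (hp : ∀ᵐ x ∂μ, p x) {U : Set α} (hU : μ U ≠ 0) : ∃ x ∈ U, p x := by
  by_contra h
  push_neg at h
  exact hU (measure_mono_null (fun x hx => h x hx) (ae_iff.mp hp))

lemma exists_term {τ : Λ → EuclideanSpace ℝ (Fin d)} {x : EuclideanSpace ℝ (Fin d)}
    (hx : kSum τ x = 1) : ∃ μ : Λ, x - τ μ ∈ kQ d := by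
  by_contra h
  push_neg at h
  have h0 : kSum τ x = 0 :=
    ENNReal.tsum_eq_zero.mpr fun μ => Set.indicator_of_notMem (h μ) _
  rw [h0] at hx
  exact one_ne_zero hx.symm

/-- The translated cubes of an a.e. tiling are pairwise `1`-separated in some coordinate. -/
lemma kDisj {τ : Λ → EuclideanSpace ℝ (Fin d)} (hτ : kTiles τ) (μ ν : Λ) (hne : μ ≠ ν) :
    ∃ j, 1 ≤ |τ μ j - τ ν j| := by
  by_contra h
  push_neg at h
  set z : EuclideanSpace ℝ (Fin d) :=
    (WithLp.equiv 2 (Fin d → ℝ)).symm (fun j => (τ μ j + τ ν j)/2) with hz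
  have hzj : ∀ j, z j = (τ μ j + τ ν j)/2 := fun j => by
    rw [hz, WithLp.equiv_symm_apply, PiLp.toLp_apply]
  set U : Set (EuclideanSpace ℝ (Fin d)) :=
    ((fun x => x - τ μ) ⁻¹' kQ d) ∩ ((fun x => x - τ ν) ⁻¹' kQ d) with hUdef
  have hUopen : IsOpen U :=
    (isOpen_kQ.preimage (continuous_id.sub continuous_const)).inter
      (isOpen_kQ.preimage (continuous_id.sub continuous_const))
  have hzU : z ∈ U := by
    constructor
    · refine mem_kQ_sub.mpr fun j => ?_
      rw [hzj j]
      have := h j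
      rw [abs_lt] at this ⊢
      constructor <;> [linarith [this.1, this.2]; linarith [this.1, this.2]]
    · refine mem_kQ_sub.mpr fun j => ?_
      rw [hzj j]
      have := h j
      rw [abs_lt] at this ⊢
      constructor <;> [linarith [this.1, this.2]; linarith [this.1, this.2]]
  have hU : volume U ≠ 0 := (hUopen.measure_pos volume ⟨z, hzU⟩).ne'
  obtain ⟨x, hxU, hx1⟩ := exists_mem_of_ae hτ hU
  have hsum := ENNReal.sum_le_tsum (f := fun μ' : Λ =>
    (kQ d).indicator (fun _ => (1 : ℝ≥0∞)) (x - τ μ')) ({μ, ν} : Finset Λ)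
  rw [Finset.sum_pair hne] at hsum
  have hm1 : x - τ μ ∈ kQ d := hxU.1
  have hm2 : x - τ ν ∈ kQ d := hxU.2
  rw [Set.indicator_of_mem hm1, Set.indicator_of_mem hm2] at hsum
  have hfin : (1:ℝ≥0∞) + 1 ≤ kSum τ x := hsum
  rw [hx1] at hfin
  norm_num at hfin

lemma kCountable {τ : Λ → EuclideanSpace ℝ (Fin d)} (hτ : kTiles τ) : Λ.Countable := by
  rw [← Set.countable_coe_iff]
  apply Pairwise.countable_of_isOpen_disjoint
    (s := fun μ : Λ => (fun x : EuclideanSpace ℝ (Fin d) => x - τ μ) ⁻¹' kQ d)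
  · intro μ ν hne
    rw [Function.onFun, Set.disjoint_left]
    intro x hxμ hxν
    obtain ⟨j, hj⟩ := kDisj hτ μ ν hne
    have h1 := mem_kQ_sub.mp hxμ j
    have h2 := mem_kQ_sub.mp hxν j
    have : |τ μ j - τ ν j| < 1 := by
      have he : τ μ j - τ ν j = (x j - τ ν j) - (x j - τ μ j) := by ring
      rw [he]
      calc |(x j - τ ν j) - (x j - τ μ j)| ≤ |x j - τ ν j| + |x j - τ μ j| := abs_sub _ _
        _ < 1 := by linarith
    linarith
  · exact fun μ => isOpen_kQ.preimage (continuous_id.sub continuous_const)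
  · exact fun μ => ⟨τ μ, show τ μ - τ μ ∈ kQ d from mem_kQ_sub.mpr fun j => by norm_num⟩

/-- key 1-D lemma: a 1-separated family of points whose unit intervals cover a.e. point of ℝ
is contained in a single residue class mod 1. -/
lemma oneDim (A : Set ℝ) (sep : ∀ a ∈ A, ∀ b ∈ A, a ≠ b → 1 ≤ |a - b|)
    (cov : ∀ᵐ s : ℝ, ∃ a ∈ A, |s - a| < 1/2) :
    ∀ a ∈ A, ∀ b ∈ A, ∃ n : ℤ, b = a + n := by
  have succ_mem : ∀ a ∈ A, a + 1 ∈ A := by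
    intro a ha
    have key : ∀ ε : ℝ, 0 < ε → ε ≤ 1/4 → ∃ c ∈ A, a + 1 ≤ c ∧ c < a + 1 + ε := by
      intro ε hε hε4
      have hU : volume (Ioo (a + 1/2) (a + 1/2 + ε)) ≠ 0 := by
        simp [Real.volume_Ioo]
        linarith
      obtain ⟨s, hs, c, hc, hsc⟩ := exists_mem_of_ae cov hU
      refine ⟨c, hc, ?_, ?_⟩
      · rcases abs_lt.mp hsc with ⟨h1, h2⟩
        have hca : a < c := by
          rcases hs with ⟨hs1, hs2⟩; linarith
        have hsep := sep c hc a ha (ne_of_gt hca)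
        rw [abs_of_pos (sub_pos.mpr hca)] at hsep
        linarith
      · rcases abs_lt.mp hsc with ⟨h1, h2⟩
        rcases hs with ⟨hs1, hs2⟩; linarith
    obtain ⟨c, hc, hc1, hc2⟩ := key (1/4) (by norm_num) (by norm_num)
    have hce : c = a + 1 := by
      have hle : c ≤ a + 1 := by
        refine le_of_forall_pos_le_add fun δ hδ => ?_
        rcases le_or_gt (1/4 : ℝ) δ with h | h
        · linarith
        · obtain ⟨c', hc', hc'1, hc'2⟩ := key δ hδ (le_of_lt h)
          have : c = c' := by
            by_contra hne
            have h1 := sep c hc c' hc' hne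
            have h2 : |c - c'| < 1 := by
              rw [abs_lt]; constructor <;> linarith
            linarith
          linarith
      linarith
    rwa [hce] at hc
  have nat_mem : ∀ a ∈ A, ∀ n : ℕ, a + n ∈ A := by
    intro a ha n
    induction n with
    | zero => simpa using ha
    | succ k ih =>
      have := succ_mem _ ih
      have he : a + ((k:ℝ) + 1) = a + (k:ℝ) + 1 := by ring
      push_cast
      rw [he]; exact this
  have main : ∀ a ∈ A, ∀ b ∈ A, a < b → ∃ n : ℤ, b = a + n := by
    intro a ha b hb hab
    have hge : 1 ≤ b - a := by
      have := sep a ha b hb (ne_of_lt hab)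
      rw [abs_of_neg (by linarith : a - b < 0)] at this
      linarith
    set n : ℤ := ⌊b - a⌋ with hn
    have hn0 : (0:ℤ) ≤ n := Int.le_floor.mpr (by push_cast; linarith)
    obtain ⟨m, hm⟩ := Int.eq_ofNat_of_zero_le hn0
    have hmem : a + (m:ℝ) ∈ A := nat_mem a ha m
    have hfl : (n:ℝ) ≤ b - a := Int.floor_le _
    have hfu : b - a < n + 1 := Int.lt_floor_add_one _
    have hbm : b = a + (m:ℝ) := by
      by_contra hne
      have h1 := sep (a + m) hmem b hb (fun h => hne h.symm)
      have hmr : (m:ℝ) = (n:ℝ) := by rw [hm]; push_cast; ring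
      have habs : |a + (m:ℝ) - b| < 1 := abs_lt.mpr ⟨by rw [hmr]; linarith, by rw [hmr]; linarith⟩
      linarith
    exact ⟨n, by rw [hbm, hm]; push_cast; ring⟩
  intro a ha b hb
  rcases lt_trichotomy a b with h | h | h
  · exact main a ha b hb h
  · exact ⟨0, by simp [h]⟩
  · obtain ⟨n, hn⟩ := main b hb a ha h
    exact ⟨-n, by push_cast; linarith⟩

section Slices
variable {n : ℕ}

/-- Coordinates-splitting parametrization of `ℝ^(n+1)`: other coordinates, then i-th. -/
def lift (i : Fin (n+1)) (p : (Fin n → ℝ) × ℝ) : EuclideanSpace ℝ (Fin (n+1)) :=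
  (MeasurableEquiv.toLp 2 (Fin (n+1) → ℝ))
    ((MeasurableEquiv.piFinSuccAbove (fun _ : Fin (n+1) => ℝ) i).symm (p.2, p.1))

lemma lift_apply_same (i : Fin (n+1)) (y : Fin n → ℝ) (s : ℝ) :
    lift i (y, s) i = s := by
  simp [lift, MeasurableEquiv.piFinSuccAbove_symm_apply, MeasurableEquiv.toLp_apply]

lemma lift_apply_succAbove (i : Fin (n+1)) (y : Fin n → ℝ) (s : ℝ) (k : Fin n) :
    lift i (y, s) (i.succAbove k) = y k := by
  simp [lift, MeasurableEquiv.piFinSuccAbove_symm_apply, MeasurableEquiv.toLp_apply]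

lemma measurePreserving_lift (i : Fin (n+1)) :
    MeasurePreserving (lift i) (volume : Measure ((Fin n → ℝ) × ℝ)) volume := by
  have hswap : MeasurePreserving (Prod.swap : (Fin n → ℝ) × ℝ → ℝ × (Fin n → ℝ))
      ((volume : Measure (Fin n → ℝ)).prod (volume : Measure ℝ)) (volume.prod volume) :=
    Measure.measurePreserving_swap
  have h2 : MeasurePreserving
      ((MeasurableEquiv.piFinSuccAbove (fun _ : Fin (n+1) => ℝ) i).symm)
      (volume.prod volume) volume := by
    have := (volume_preserving_piFinSuccAbove (fun _ : Fin (n+1) => ℝ) i).symm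
    rwa [Measure.volume_eq_prod] at this
  have h1 : MeasurePreserving (MeasurableEquiv.toLp 2 (Fin (n+1) → ℝ))
      volume volume :=
    (EuclideanSpace.volume_preserving_symm_measurableEquiv_toLp (Fin (n+1))).symm
  have := (h1.comp h2).comp hswap
  rw [← Measure.volume_eq_prod] at this
  exact this

lemma ae_slices_of_ae (i : Fin (n+1)) {p : EuclideanSpace ℝ (Fin (n+1)) → Prop}
    (h : ∀ᵐ x, p x) : ∀ᵐ y : Fin n → ℝ, ∀ᵐ s : ℝ, p (lift i (y, s)) := by
  have h1 : ∀ᵐ z ∂(volume : Measure ((Fin n → ℝ) × ℝ)), p (lift i z) :=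
    (measurePreserving_lift i).quasiMeasurePreserving.ae h
  rw [Measure.volume_eq_prod] at h1
  exact Measure.ae_ae_of_ae_prod h1

lemma ae_of_ae_slices (i : Fin (n+1)) {p : EuclideanSpace ℝ (Fin (n+1)) → Prop}
    (hm : MeasurableSet {x | p x})
    (h : ∀ᵐ y : Fin n → ℝ, ∀ᵐ s : ℝ, p (lift i (y, s))) : ∀ᵐ x, p x := by
  have hψ := measurePreserving_lift i
  have hS : MeasurableSet {x | ¬ p x} := by
    rw [← Set.compl_setOf]; exact hm.compl
  rw [ae_iff]
  have hpre : volume (lift i ⁻¹' {x | ¬ p x}) = volume {x | ¬ p x} :=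
    hψ.measure_preimage hS.nullMeasurableSet
  rw [← hpre, Measure.volume_eq_prod,
    Measure.measure_prod_null (hψ.measurable hS)]
  filter_upwards [h] with y hy
  exact ae_iff.mp hy

end Slices

section Shift
variable {n : ℕ} {Λ : Set (EuclideanSpace ℝ (Fin (n+1)))}

/-- Shift by `t` in direction `i` all cubes whose `i`-th coordinate is an integer. -/
def kShift (τ : Λ → EuclideanSpace ℝ (Fin (n+1))) (i : Fin (n+1)) (t : ℝ) :
    Λ → EuclideanSpace ℝ (Fin (n+1)) :=
  fun μ => (WithLp.equiv 2 (Fin (n+1) → ℝ)).symm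
    (fun j => τ μ j + if j = i ∧ (∃ m : ℤ, τ μ i = (m:ℝ)) then t else 0)

lemma kShift_apply (τ : Λ → EuclideanSpace ℝ (Fin (n+1))) (i : Fin (n+1)) (t : ℝ)
    (μ : Λ) (j : Fin (n+1)) :
    kShift τ i t μ j = τ μ j + if j = i ∧ (∃ m : ℤ, τ μ i = (m:ℝ)) then t else 0 := by
  rw [kShift, WithLp.equiv_symm_apply, PiLp.toLp_apply]

theorem kTiles_shift (hΛ : Λ.Countable) {τ : Λ → EuclideanSpace ℝ (Fin (n+1))}
    (hτ : kTiles τ) (i : Fin (n+1)) (t : ℝ) : kTiles (kShift τ i t) := by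
  have hdisj := kDisj hτ
  refine ae_of_ae_slices i (p := fun x => kSum (kShift τ i t) x = 1)
    (measurable_kSum hΛ _ (measurableSet_singleton 1)) ?_
  filter_upwards [ae_slices_of_ae i hτ] with y hY
  set M : Set Λ := {μ | ∀ k : Fin n, |y k - τ μ (i.succAbove k)| < 1/2} with hMdef
  have hcond : ∀ (μ : Λ) (k : Fin n), kShift τ i t μ (i.succAbove k) = τ μ (i.succAbove k) := by
    intro μ k
    rw [kShift_apply, if_neg (fun h => (Fin.succAbove_ne i k) h.1), add_zero]
  have hoff : ∀ (s : ℝ) (μ : Λ), μ ∉ M → ∀ v : EuclideanSpace ℝ (Fin (n+1)),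
      (∀ k, v (i.succAbove k) = τ μ (i.succAbove k)) →
      (kQ (n+1)).indicator (fun _ => (1:ℝ≥0∞)) (lift i (y, s) - v) = 0 := by
    intro s μ hμ v hv
    apply Set.indicator_of_notMem
    intro hmem
    apply hμ
    intro k
    have := mem_kQ_sub.mp hmem (i.succAbove k)
    rwa [lift_apply_succAbove, hv] at this
  by_cases hflag : ∃ μ ∈ M, ∃ m : ℤ, τ μ i = (m:ℝ)
  · set A : Set ℝ := {a | ∃ μ ∈ M, τ μ i = a} with hAdef
    have sep : ∀ a ∈ A, ∀ b ∈ A, a ≠ b → 1 ≤ |a - b| := by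
      rintro a ⟨μ, hμ, rfl⟩ b ⟨ν, hν, rfl⟩ hab
      have hne : μ ≠ ν := fun h => hab (by rw [h])
      obtain ⟨j, hj⟩ := hdisj μ ν hne
      rcases eq_or_ne j i with rfl | hji
      · exact hj
      · obtain ⟨k, hk⟩ := Fin.exists_succAbove_eq hji
        exfalso
        have h1 := hμ k
        have h2 := hν k
        rw [hk] at h1 h2
        have hlt : |τ μ j - τ ν j| < 1 := by
          have he : τ μ j - τ ν j = (y k - τ ν j) - (y k - τ μ j) := by ring
          rw [he]
          calc |(y k - τ ν j) - (y k - τ μ j)| ≤ |y k - τ ν j| + |y k - τ μ j| := abs_sub _ _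
            _ < 1 := by linarith
        linarith
    have cov : ∀ᵐ s : ℝ, ∃ a ∈ A, |s - a| < 1/2 := by
      filter_upwards [hY] with s hs
      obtain ⟨μ, hμmem⟩ := exists_term hs
      have hco := mem_kQ_sub.mp hμmem
      have hμM : μ ∈ M := by
        intro k
        have := hco (i.succAbove k)
        rwa [lift_apply_succAbove] at this
      refine ⟨τ μ i, ⟨μ, hμM, rfl⟩, ?_⟩
      have := hco i
      rwa [lift_apply_same] at this
    have hall := oneDim A sep cov
    obtain ⟨ν0, hν0, m0, hm0⟩ := hflag
    have hint : ∀ μ ∈ M, ∃ m : ℤ, τ μ i = (m:ℝ) := by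
      intro μ hμ
      obtain ⟨m, hm⟩ := hall _ ⟨ν0, hν0, rfl⟩ _ ⟨μ, hμ, rfl⟩
      exact ⟨m0 + m, by rw [hm, hm0]; push_cast; ring⟩
    have hterm : ∀ (s : ℝ) (μ : Λ),
        (kQ (n+1)).indicator (fun _ => (1:ℝ≥0∞)) (lift i (y, s) - kShift τ i t μ)
          = (kQ (n+1)).indicator (fun _ => (1:ℝ≥0∞)) (lift i (y, s - t) - τ μ) := by
      intro s μ
      by_cases hμ : μ ∈ M
      · have e1 : lift i (y, s) i - kShift τ i t μ i = lift i (y, s - t) i - τ μ i := by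
          rw [lift_apply_same, lift_apply_same, kShift_apply, if_pos ⟨rfl, hint μ hμ⟩]
          ring
        have e2 : ∀ k, lift i (y, s) (i.succAbove k) - kShift τ i t μ (i.succAbove k)
            = lift i (y, s - t) (i.succAbove k) - τ μ (i.succAbove k) := fun k => by
          rw [lift_apply_succAbove, lift_apply_succAbove, hcond]
        have hciff : (lift i (y, s) - kShift τ i t μ ∈ kQ (n+1)) ↔
            (lift i (y, s - t) - τ μ ∈ kQ (n+1)) := by
          rw [mem_kQ_sub, mem_kQ_sub, Fin.forall_iff_succAbove i, Fin.forall_iff_succAbove i]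
          rw [e1]
          exact and_congr Iff.rfl (forall_congr' fun k => by rw [e2])
        simp only [Set.indicator_apply]
        exact if_congr hciff rfl rfl
      · rw [hoff s μ hμ _ (hcond μ), hoff (s - t) μ hμ (τ μ) (fun k => rfl)]
    have htrans : ∀ᵐ s : ℝ, kSum τ (lift i (y, s - t)) = 1 :=
      (measurePreserving_sub_right volume t).quasiMeasurePreserving.ae hY
    filter_upwards [htrans] with s hs
    rw [show kSum (kShift τ i t) (lift i (y, s)) = kSum τ (lift i (y, s - t)) from
      tsum_congr fun μ => hterm s μ]
    exact hs
  · push_neg at hflag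
    have hterm : ∀ (s : ℝ) (μ : Λ),
        (kQ (n+1)).indicator (fun _ => (1:ℝ≥0∞)) (lift i (y, s) - kShift τ i t μ)
          = (kQ (n+1)).indicator (fun _ => (1:ℝ≥0∞)) (lift i (y, s) - τ μ) := by
      intro s μ
      by_cases hμ : μ ∈ M
      · have e1 : lift i (y, s) i - kShift τ i t μ i = lift i (y, s) i - τ μ i := by
          rw [kShift_apply, if_neg (fun h => hflag μ hμ h.2.choose h.2.choose_spec), add_zero]
        have e2 : ∀ k, lift i (y, s) (i.succAbove k) - kShift τ i t μ (i.succAbove k)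
            = lift i (y, s) (i.succAbove k) - τ μ (i.succAbove k) := fun k => by
          rw [hcond]
        have hciff : (lift i (y, s) - kShift τ i t μ ∈ kQ (n+1)) ↔
            (lift i (y, s) - τ μ ∈ kQ (n+1)) := by
          rw [mem_kQ_sub, mem_kQ_sub, Fin.forall_iff_succAbove i, Fin.forall_iff_succAbove i]
          rw [e1]
          exact and_congr Iff.rfl (forall_congr' fun k => by rw [e2])
        simp only [Set.indicator_apply]
        exact if_congr hciff rfl rfl
      · rw [hoff s μ hμ _ (hcond μ), hoff s μ hμ (τ μ) (fun k => rfl)]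
    filter_upwards [hY] with s hs
    rw [show kSum (kShift τ i t) (lift i (y, s)) = kSum τ (lift i (y, s)) from
      tsum_congr fun μ => hterm s μ]
    exact hs

end Shift
end KellerProof

/-- Keller's theorem: if the open unit cube `Q = (-1/2, 1/2)^d` tiles `ℝ^d` when
translated by `Λ` (with `0 ∈ Λ`), then every nonzero `λ ∈ Λ` has at least one
coordinate which is a nonzero integer. -/
theorem keller {d : ℕ}
    (Q : Set (EuclideanSpace ℝ (Fin d)))
    (hQ : Q = {x : EuclideanSpace ℝ (Fin d) | ∀ j, x j ∈ Set.Ioo (-(1/2) : ℝ) (1/2)})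
    (Λ : Set (EuclideanSpace ℝ (Fin d))) (h0 : (0 : EuclideanSpace ℝ (Fin d)) ∈ Λ)
    (htile : tilesAt (Q.indicator fun _ => (1 : ℝ)) Λ 1) :
    ∀ l ∈ Λ, l ≠ 0 → ∃ j : Fin d, l j ≠ 0 ∧ ∃ n : ℤ, l j = (n : ℝ) := by

  intro l hl hlne
  by_contra hcon
  push_neg at hcon
  have hzero : ∀ j, (∃ m : ℤ, l j = (m:ℝ)) → l j = 0 := by
    intro j hm
    by_contra h
    obtain ⟨m, hm⟩ := hm
    exact hcon j h m hm
  have hQk : Q = KellerProof.kQ d := by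
    rw [hQ]; ext x
    simp only [KellerProof.kQ, Set.mem_setOf_eq, Set.mem_Ioo]
    exact forall_congr' fun j => (abs_lt).symm
  have hterm : ∀ z : EuclideanSpace ℝ (Fin d),
      (KellerProof.kQ d).indicator (fun _ => (1:ℝ≥0∞)) z
        = ENNReal.ofReal (Q.indicator (fun _ => (1:ℝ)) z) := by
    intro z
    by_cases hz : z ∈ Q
    · rw [Set.indicator_of_mem hz, Set.indicator_of_mem (show z ∈ KellerProof.kQ d by
        rwa [hQk] at hz), ENNReal.ofReal_one]
    · rw [Set.indicator_of_notMem hz, Set.indicator_of_notMem (show z ∉ KellerProof.kQ d by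
        rwa [hQk] at hz), ENNReal.ofReal_zero]
  have hkt0 : KellerProof.kTiles (Subtype.val : Λ → EuclideanSpace ℝ (Fin d)) := by
    filter_upwards [htile] with x hx
    rw [ENNReal.ofReal_one] at hx
    have he : KellerProof.kSum (Subtype.val : Λ → EuclideanSpace ℝ (Fin d)) x
        = ∑' μ : Λ, ENNReal.ofReal ((Q.indicator fun _ => (1:ℝ)) (x - μ.1)) :=
      tsum_congr fun μ => hterm _
    rw [he]
    exact hx
  cases d with
  | zero => exact hlne (Subsingleton.elim l 0)
  | succ n =>
    have hΛ : Λ.Countable := KellerProof.kCountable hkt0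
    have key : ∀ K : ℕ, ∃ τ : Λ → EuclideanSpace ℝ (Fin (n+1)), KellerProof.kTiles τ ∧
        ∀ (μ : Λ) (j : Fin (n+1)), τ μ j
          = μ.1 j + (if (j:ℕ) < K ∧ (∃ m : ℤ, μ.1 j = (m:ℝ)) then l j else 0) := by
      intro K
      induction K with
      | zero => exact ⟨Subtype.val, hkt0, fun μ j => by simp⟩
      | succ K ih =>
        obtain ⟨τ, hτ, hco⟩ := ih
        by_cases hK : K < n + 1
        · set i : Fin (n+1) := ⟨K, hK⟩ with hidef
          refine ⟨KellerProof.kShift τ i (l i), KellerProof.kTiles_shift hΛ hτ i (l i), ?_⟩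
          intro μ j
          have hτμi : τ μ i = μ.1 i := by
            rw [hco μ i, if_neg, add_zero]
            rintro ⟨h1, -⟩
            exact lt_irrefl K h1
          rw [KellerProof.kShift_apply, hco μ j, hτμi]
          rcases eq_or_ne j i with rfl | hji
          · have hc1 : ¬((i:ℕ) < K ∧ (∃ m : ℤ, μ.1 i = (m:ℝ))) := by
              rintro ⟨h1, -⟩
              exact lt_irrefl K h1
            rw [if_neg hc1, add_zero]
            by_cases hP : ∃ m : ℤ, μ.1 i = (m:ℝ)
            · rw [if_pos (show i = i ∧ (∃ m : ℤ, μ.1 i = (m:ℝ)) from ⟨rfl, hP⟩),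
                if_pos (show ((i:ℕ) < K+1) ∧ (∃ m : ℤ, μ.1 i = (m:ℝ)) from
                  ⟨Nat.lt_succ_self K, hP⟩)]
            · rw [if_neg (show ¬(i = i ∧ (∃ m : ℤ, μ.1 i = (m:ℝ))) from fun h => hP h.2),
                if_neg (show ¬(((i:ℕ) < K+1) ∧ (∃ m : ℤ, μ.1 i = (m:ℝ))) from fun h => hP h.2),
                add_zero]
          · rw [if_neg (show ¬(j = i ∧ ∃ m : ℤ, μ.1 i = (m:ℝ)) from fun h => hji h.1), add_zero]
            have hne' : (j:ℕ) ≠ K := fun h => hji (Fin.ext h)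
            refine congrArg (fun w => μ.1 j + w) (if_congr ?_ rfl rfl)
            constructor
            · rintro ⟨h1, h2⟩; exact ⟨by omega, h2⟩
            · rintro ⟨h1, h2⟩; exact ⟨by omega, h2⟩
        · refine ⟨τ, hτ, fun μ j => ?_⟩
          rw [hco μ j]
          have hj : (j:ℕ) < K := by omega
          refine congrArg (fun w => μ.1 j + w) (if_congr ?_ rfl rfl)
          constructor
          · rintro ⟨h1, h2⟩; exact ⟨by omega, h2⟩
          · rintro ⟨h1, h2⟩; exact ⟨hj, h2⟩
    obtain ⟨σ, hσ, hσco⟩ := key (n+1)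
    set μ0 : Λ := ⟨0, h0⟩ with hμ0def
    set μ1 : Λ := ⟨l, hl⟩ with hμ1def
    have hne : μ0 ≠ μ1 := fun h => hlne ((congrArg Subtype.val h).symm : l = 0)
    have hc0 : ∀ j, σ μ0 j = l j := by
      intro j
      rw [hσco]
      have h0j : μ0.1 j = 0 := rfl
      rw [h0j, if_pos (show ((j:ℕ) < n+1) ∧ (∃ m : ℤ, (0:ℝ) = (m:ℝ)) from
        ⟨j.2, ⟨0, by norm_num⟩⟩), zero_add]
    have hc1 : ∀ j, σ μ1 j = l j := by
      intro j
      have h1j : μ1.1 j = l j := rfl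
      by_cases hP : ∃ m : ℤ, l j = (m:ℝ)
      · have hz := hzero j hP
        rw [hσco, h1j, if_pos (show ((j:ℕ) < n+1) ∧ (∃ m : ℤ, l j = (m:ℝ)) from ⟨j.2, hP⟩),
          hz, add_zero]
      · rw [hσco, h1j, if_neg (show ¬(((j:ℕ) < n+1) ∧ (∃ m : ℤ, l j = (m:ℝ))) from
          fun h => hP h.2), add_zero]
    have hUopen : IsOpen ((fun x : EuclideanSpace ℝ (Fin (n+1)) => x - l) ⁻¹'
        KellerProof.kQ (n+1)) :=
      KellerProof.isOpen_kQ.preimage (continuous_id.sub continuous_const)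
    have hU : volume ((fun x : EuclideanSpace ℝ (Fin (n+1)) => x - l) ⁻¹'
        KellerProof.kQ (n+1)) ≠ 0 := by
      refine (hUopen.measure_pos volume ⟨l, ?_⟩).ne'
      exact KellerProof.mem_kQ_sub.mpr fun j => by rw [sub_self, abs_zero]; norm_num
    obtain ⟨x, hxU, hx1⟩ := KellerProof.exists_mem_of_ae hσ hU
    have hxQ : x - l ∈ KellerProof.kQ (n+1) := hxU
    have hm0 : x - σ μ0 ∈ KellerProof.kQ (n+1) :=
      KellerProof.mem_kQ_sub.mpr fun j => by
        rw [hc0 j]; exact KellerProof.mem_kQ_sub.mp hxQ j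
    have hm1 : x - σ μ1 ∈ KellerProof.kQ (n+1) :=
      KellerProof.mem_kQ_sub.mpr fun j => by
        rw [hc1 j]; exact KellerProof.mem_kQ_sub.mp hxQ j
    have hsum := ENNReal.sum_le_tsum (f := fun μ' : Λ =>
      (KellerProof.kQ (n+1)).indicator (fun _ => (1 : ℝ≥0∞)) (x - σ μ')) ({μ0, μ1} : Finset Λ)
    rw [Finset.sum_pair hne] at hsum
    rw [Set.indicator_of_mem hm0, Set.indicator_of_mem hm1] at hsum
    have hfin : (1:ℝ≥0∞) + 1 ≤ KellerProof.kSum σ x := hsum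
    rw [hx1] at hfin
    norm_num at hfin
end
end

section
/- Let f : ℝ^d → ℝ be nonnegative and integrable with ∫ f > 0, let ℓ > 0, and let Λ ⊆ ℝ^d be countable such that f + Λ is a tiling of ℝ^d at level ℓ. Then Λ has asymptotic density ℓ / ∫ f, i.e., #(Λ ∩ B_R(x))/|B_R(x)| → ℓ / ∫ f as R → ∞, uniformly in x ∈ ℝ^d. -/
open MeasureTheory Real Complex Filter Topology Metric Set Bornology ComplexConjugate
open scoped FourierTransform ENNReal RealInnerProductSpace ContDiff Classical Pointwise

noncomputable section

/-- `Λ` has asymptotic density `ρ`: `#(Λ ∩ B_R(x))/|B_R(x)| → ρ` as `R → ∞`,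
uniformly in `x`. -/
def hasUniformDensity {d : ℕ} (Λ : Set (EuclideanSpace ℝ (Fin d))) (ρ : ℝ) : Prop :=
  ∀ ε : ℝ, 0 < ε → ∃ R₀ : ℝ, ∀ (x : EuclideanSpace ℝ (Fin d)) (R : ℝ), R₀ ≤ R →
    (Λ ∩ Metric.ball x R).Finite ∧
    |(Nat.card ↥(Λ ∩ Metric.ball x R) : ℝ) / (volume (Metric.ball x R)).toReal - ρ| ≤ ε

set_option maxHeartbeats 2000000 in
/-- If `f ≥ 0` is integrable with `∫f > 0` and `f + Λ` tiles `ℝ^d` at level `ℓ > 0`,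
then `Λ` has asymptotic density `ℓ / ∫f`, uniformly in the centre of the balls. -/
theorem tiling_density {d : ℕ}
    (f : EuclideanSpace ℝ (Fin d) → ℝ)
    (hf0 : ∀ x, 0 ≤ f x) (hfi : Integrable f) (hfpos : 0 < ∫ x, f x)
    (ℓ : ℝ) (hℓ : 0 < ℓ)
    (Λ : Set (EuclideanSpace ℝ (Fin d))) (hΛ : Λ.Countable)
    (htile : tilesAt f Λ ℓ) :
    hasUniformDensity Λ (ℓ / ∫ x, f x) := by
  haveI : Countable ↥Λ := hΛ.to_subtype
  set F : ℝ := ∫ x, f x with hFdef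
  set g : (EuclideanSpace ℝ (Fin d)) → ℝ≥0∞ := fun z => ENNReal.ofReal (f z) with hgdef
  have hg : AEMeasurable g volume := ENNReal.measurable_ofReal.comp_aemeasurable hfi.aemeasurable
  have hF' : ∫⁻ z, g z = ENNReal.ofReal F :=
    (ofReal_integral_eq_lintegral_ofReal hfi (ae_of_all _ hf0)).symm
  -- volume of balls
  set v : ℝ≥0∞ := volume (ball (0:(EuclideanSpace ℝ (Fin d))) 1) with hvdef
  have hv0 : v ≠ 0 := (measure_ball_pos _ _ one_pos).ne'
  have hvtop : v ≠ ⊤ := measure_ball_lt_top.ne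
  set v₀ : ℝ := v.toReal with hv₀def
  have hv₀pos : 0 < v₀ := ENNReal.toReal_pos hv0 hvtop
  have vol_ball : ∀ (x : (EuclideanSpace ℝ (Fin d))) (R : ℝ), 0 < R →
      volume (ball x R) = ENNReal.ofReal (R ^ d) * v := by
    intro x R hR
    rcases Nat.eq_zero_or_pos d with hd | hd
    · subst hd
      haveI : Unique (EuclideanSpace ℝ (Fin 0)) :=
        ⟨⟨0⟩, fun a => by ext i; exact Fin.elim0 i⟩
      have h1 : ball x R = univ := eq_univ_of_forall fun y => by
        rw [mem_ball, Subsingleton.elim y x, dist_self]; exact hR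
      have h2 : ball (0 : EuclideanSpace ℝ (Fin 0)) 1 = univ := eq_univ_of_forall fun y => by
        rw [mem_ball, Subsingleton.elim y (0 : EuclideanSpace ℝ (Fin 0)), dist_self]; exact one_pos
      rw [hvdef, h1, h2, pow_zero, ENNReal.ofReal_one, one_mul]
    · haveI : Nontrivial (EuclideanSpace ℝ (Fin d)) :=
        Module.nontrivial_of_finrank_pos (R := ℝ)
          (by rw [finrank_euclideanSpace_fin]; exact hd)
      rw [Measure.addHaar_ball volume x hR.le, finrank_euclideanSpace_fin, hvdef]
  -- translation invariance of set integrals over balls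
  have htrans : ∀ (l x : (EuclideanSpace ℝ (Fin d))) (R : ℝ),
      ∫⁻ y in ball x R, g (y - l) = ∫⁻ y in ball (x - l) R, g y := by
    intro l x R
    rw [← lintegral_indicator measurableSet_ball _, ← lintegral_indicator measurableSet_ball _]
    rw [← lintegral_add_right_eq_self
      (fun y => (ball x R).indicator (fun y' => g (y' - l)) y) l]
    apply lintegral_congr
    intro z
    have hiff : z + l ∈ ball x R ↔ z ∈ ball (x - l) R := by
      rw [mem_ball, mem_ball, dist_eq_norm, dist_eq_norm]
      have e : z + l - x = z - (x - l) := by abel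
      rw [e]
    simp only [Set.indicator_apply, hiff, add_sub_cancel_right]
  have hmeas : ∀ l : (EuclideanSpace ℝ (Fin d)), AEMeasurable (fun y => g (y - l)) volume := fun l =>
    hg.comp_quasiMeasurePreserving (measurePreserving_sub_right volume l).quasiMeasurePreserving
  -- the integrated tiling identity
  have tilesum : ∀ (x : (EuclideanSpace ℝ (Fin d))) (R : ℝ),
      ∑' l : Λ, ∫⁻ y in ball x R, g (y - ↑l) = ENNReal.ofReal ℓ * volume (ball x R) := by
    intro x R
    unfold tilesAt at htile
    calc ∑' l : Λ, ∫⁻ y in ball x R, g (y - ↑l)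
        = ∫⁻ y in ball x R, ∑' l : Λ, g (y - ↑l) :=
          (lintegral_tsum fun l : Λ => (hmeas ↑l).restrict).symm
      _ = ∫⁻ _ in ball x R, ENNReal.ofReal ℓ := lintegral_congr_ae (ae_restrict_of_ae htile)
      _ = ENNReal.ofReal ℓ * volume (ball x R) := setLIntegral_const _ _
  -- counting function
  set cnt : Set (EuclideanSpace ℝ (Fin d)) → ℝ≥0∞ := fun S => ((Λ ∩ S).encard : ℝ≥0∞) with hcntdef
  have hcnt : ∀ S : Set (EuclideanSpace ℝ (Fin d)),
      ∑' l : Λ, S.indicator (fun _ => (1:ℝ≥0∞)) ↑l = cnt S := by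
    intro S
    have himg : Subtype.val '' (Subtype.val ⁻¹' S : Set ↥Λ) = Λ ∩ S := by
      rw [Set.image_preimage_eq_inter_range, Subtype.range_coe]
      exact Set.inter_comm _ _
    calc ∑' l : Λ, S.indicator (fun _ => (1:ℝ≥0∞)) ↑l
        = ∑' l : Λ, (Subtype.val ⁻¹' S : Set ↥Λ).indicator (fun _ => (1:ℝ≥0∞)) l :=
          tsum_congr fun l => by simp [Set.indicator_apply, Set.mem_preimage]
      _ = ∑' _ : ↥(Subtype.val ⁻¹' S : Set ↥Λ), (1:ℝ≥0∞) := (tsum_subtype _ _).symm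
      _ = ((Subtype.val ⁻¹' S : Set (↥Λ)).encard : ℝ≥0∞) := ENNReal.tsum_set_one _
      _ = cnt S := by
          show ((Subtype.val ⁻¹' S : Set (↥Λ)).encard : ℝ≥0∞) = ((Λ ∩ S).encard : ℝ≥0∞)
          rw [← himg, Subtype.val_injective.encard_image]
  -- tail integral
  set T : ℝ → ℝ≥0∞ := fun r => ∫⁻ z in (ball (0:(EuclideanSpace ℝ (Fin d))) r)ᶜ, g z with hTdef
  have hTsmall : ∀ δ : ℝ≥0∞, 0 < δ → ∃ r : ℝ, 1 ≤ r ∧ T r ≤ δ := by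
    intro δ hδ
    set ν := volume.withDensity g with hνdef
    have hνs : ∀ s : Set (EuclideanSpace ℝ (Fin d)), MeasurableSet s → ν s = ∫⁻ z in s, g z :=
      fun s hs => withDensity_apply g hs
    have hνtop : ∀ n : ℕ, ν ((ball (0:EuclideanSpace ℝ (Fin d)) (n:ℝ))ᶜ) ≠ ⊤ := by
      intro n
      rw [hνs _ measurableSet_ball.compl]
      exact ne_top_of_le_ne_top (by rw [hF']; exact ENNReal.ofReal_ne_top)
        (setLIntegral_le_lintegral _ _)
    have hiempty : (⋂ n : ℕ, (ball (0:EuclideanSpace ℝ (Fin d)) (n:ℝ))ᶜ) = ∅ := by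
      apply Set.eq_empty_iff_forall_notMem.mpr
      intro z hz
      obtain ⟨n, hn⟩ := exists_nat_gt (dist z (0:EuclideanSpace ℝ (Fin d)))
      exact (Set.mem_iInter.mp hz n) (mem_ball.mpr hn)
    have hT0 : Tendsto (fun n : ℕ => ν ((ball (0:EuclideanSpace ℝ (Fin d)) (n:ℝ))ᶜ)) atTop
        (𝓝 0) := by
      have := tendsto_measure_iInter_atTop (μ := ν)
        (fun n : ℕ => measurableSet_ball.compl.nullMeasurableSet)
        (fun m n hmn => compl_subset_compl.mpr (ball_subset_ball (by exact_mod_cast hmn)))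
        ⟨0, hνtop 0⟩
      rwa [hiempty, measure_empty] at this
    obtain ⟨n, hn⟩ := ((hT0.eventually_le_const hδ).and (eventually_ge_atTop 1)).exists
    refine ⟨(n:ℝ), by exact_mod_cast hn.2, ?_⟩
    rw [hTdef]
    simp only []
    rw [← hνs _ measurableSet_ball.compl]
    exact hn.1
  -- upper estimate on counts
  have hA : ∀ (δ : ℝ≥0∞) (r : ℝ), 0 < r → T r ≤ δ → ∀ (x : (EuclideanSpace ℝ (Fin d))) (R : ℝ), 0 < R →
      cnt (ball x R) * (ENNReal.ofReal F - δ) ≤ ENNReal.ofReal ℓ * volume (ball x (R + r)) := by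
    intro δ r hr hT x R hR
    rw [← hcnt (ball x R), ← ENNReal.tsum_mul_right, ← tilesum x (R + r)]
    apply ENNReal.tsum_le_tsum
    intro l
    by_cases hl : (l : EuclideanSpace ℝ (Fin d)) ∈ ball x R
    · rw [Set.indicator_of_mem hl, one_mul, htrans]
      have hsub : ball (0:EuclideanSpace ℝ (Fin d)) r ⊆ ball (x - ↑l) (R + r) := by
        apply ball_subset_ball'
        have h1 : dist (0:EuclideanSpace ℝ (Fin d)) (x - ↑l) = dist (↑l : EuclideanSpace ℝ (Fin d)) x := by
          rw [dist_zero_left, dist_eq_norm, norm_sub_rev]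
        rw [h1]
        have := mem_ball.mp hl
        linarith
      calc ENNReal.ofReal F - δ ≤ ∫⁻ y in ball (0:EuclideanSpace ℝ (Fin d)) r, g y := by
            rw [tsub_le_iff_right, ← hF',
              ← lintegral_add_compl g (measurableSet_ball (x := (0:EuclideanSpace ℝ (Fin d))) (ε := r))]
            exact add_le_add (le_refl _) hT
        _ ≤ ∫⁻ y in ball (x - ↑l) (R + r), g y := lintegral_mono_set hsub
    · rw [Set.indicator_of_notMem hl, zero_mul]
      exact zero_le
  -- lower estimate on counts
  have hB : ∀ (δ K : ℝ≥0∞) (r : ℝ), 0 < r → T r ≤ δ → K ≠ ⊤ →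
      ∀ (x : (EuclideanSpace ℝ (Fin d))) (R : ℝ), r < R → (∀ c : (EuclideanSpace ℝ (Fin d)), cnt (ball c (R - r)) ≤ K) →
      ENNReal.ofReal ℓ * volume (ball x (R - r)) ≤ cnt (ball x R) * ENNReal.ofReal F
        + K * δ := by
    intro δ K r hr hT hKtop x R hRr hK
    rw [← tilesum x (R - r)]
    set W : ↥Λ → (EuclideanSpace ℝ (Fin d)) → ℝ≥0∞ := fun l z =>
      if (l : EuclideanSpace ℝ (Fin d)) ∈ ball x R then 0
      else (ball (x - ↑l) (R - r)).indicator g z with hWdef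
    have hWmeas : ∀ l : ↥Λ, AEMeasurable (W l) volume := by
      intro l
      rw [hWdef]
      by_cases hl : (l : EuclideanSpace ℝ (Fin d)) ∈ ball x R
      · simp only [if_pos hl]; exact aemeasurable_const
      · simp only [if_neg hl]; exact hg.indicator measurableSet_ball
    have key : ∀ l : ↥Λ, ∫⁻ y in ball x (R - r), g (y - ↑l) ≤
        (ball x R).indicator (fun _ => (1:ℝ≥0∞)) ↑l * ENNReal.ofReal F + ∫⁻ z, W l z := by
      intro l
      by_cases hl : (l : EuclideanSpace ℝ (Fin d)) ∈ ball x R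
      · have hW0 : W l = fun _ => 0 := by rw [hWdef]; simp only [if_pos hl]
        rw [Set.indicator_of_mem hl, one_mul, hW0, lintegral_zero, add_zero, htrans, ← hF']
        exact setLIntegral_le_lintegral _ _
      · have hWl : W l = (ball (x - ↑l) (R - r)).indicator g := by
          rw [hWdef]; simp only [if_neg hl]
        rw [Set.indicator_of_notMem hl, zero_mul, zero_add, hWl, htrans,
          lintegral_indicator measurableSet_ball _]
    have houter : ∑' l : Λ, ∫⁻ z, W l z ≤ K * δ := by
      rw [← lintegral_tsum hWmeas]
      have hpt : ∀ z, (∑' l : Λ, W l z) ≤ (ball (0:EuclideanSpace ℝ (Fin d)) r)ᶜ.indicator g z * K := by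
        intro z
        by_cases hz : z ∈ ball (0:EuclideanSpace ℝ (Fin d)) r
        · have hall : ∀ l : ↥Λ, W l z = 0 := by
            intro l
            rw [hWdef]
            simp only []
            split_ifs with hl
            · rfl
            · apply Set.indicator_of_notMem
              intro hzz
              apply hl
              rw [mem_ball] at hzz hz ⊢
              rw [dist_eq_norm] at hzz hz ⊢
              have e : (↑l : EuclideanSpace ℝ (Fin d)) - x = (z - (x - ↑l)) - z := by abel
              rw [e]
              calc ‖(z - (x - ↑l)) - z‖ ≤ ‖z - (x - ↑l)‖ + ‖z‖ := norm_sub_le _ _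
                _ < (R - r) + r := by
                    have : ‖z‖ < r := by simpa using hz
                    exact add_lt_add hzz this
                _ = R := by ring
          calc (∑' l : Λ, W l z) = ∑' _ : Λ, (0:ℝ≥0∞) := tsum_congr hall
            _ = 0 := tsum_zero
            _ ≤ _ := zero_le
        · have hterm : ∀ l : ↥Λ, W l z ≤
              (ball (x - z) (R - r)).indicator (fun _ => (1:ℝ≥0∞)) ↑l * g z := by
            intro l
            rw [hWdef]
            simp only []
            split_ifs with hl
            · exact zero_le
            · by_cases hzz : z ∈ ball (x - ↑l) (R - r)
              · have hl2 : (↑l : EuclideanSpace ℝ (Fin d)) ∈ ball (x - z) (R - r) := by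
                  rw [mem_ball, dist_eq_norm] at hzz ⊢
                  have e : (↑l : EuclideanSpace ℝ (Fin d)) - (x - z) = z - (x - ↑l) := by abel
                  rw [e]
                  exact hzz
                rw [Set.indicator_of_mem hzz, Set.indicator_of_mem hl2, one_mul]
              · rw [Set.indicator_of_notMem hzz]
                exact zero_le
          calc (∑' l : Λ, W l z)
              ≤ ∑' l : Λ, (ball (x - z) (R - r)).indicator (fun _ => (1:ℝ≥0∞)) ↑l * g z :=
                ENNReal.tsum_le_tsum hterm
            _ = cnt (ball (x - z) (R - r)) * g z := by rw [ENNReal.tsum_mul_right, hcnt]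
            _ ≤ K * g z := mul_le_mul_left (hK (x - z)) _
            _ = _ := by rw [Set.indicator_of_mem (Set.mem_compl hz), mul_comm]
      calc ∫⁻ z, ∑' l : Λ, W l z
          ≤ ∫⁻ z, (ball (0:EuclideanSpace ℝ (Fin d)) r)ᶜ.indicator g z * K := lintegral_mono hpt
        _ = (∫⁻ z in (ball (0:EuclideanSpace ℝ (Fin d)) r)ᶜ, g z) * K := by
            rw [lintegral_mul_const'' K (hg.indicator measurableSet_ball.compl),
              lintegral_indicator measurableSet_ball.compl _]
        _ = T r * K := by rw [hTdef]
        _ ≤ K * δ := by rw [mul_comm]; exact mul_le_mul_right hT _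
    calc ∑' l : Λ, ∫⁻ y in ball x (R - r), g (y - ↑l)
        ≤ ∑' l : Λ, ((ball x R).indicator (fun _ => (1:ℝ≥0∞)) ↑l * ENNReal.ofReal F
            + ∫⁻ z, W l z) := ENNReal.tsum_le_tsum key
      _ = (∑' l : Λ, (ball x R).indicator (fun _ => (1:ℝ≥0∞)) ↑l * ENNReal.ofReal F)
            + ∑' l : Λ, ∫⁻ z, W l z := ENNReal.tsum_add
      _ ≤ cnt (ball x R) * ENNReal.ofReal F + K * δ := by
          apply add_le_add _ houter
          rw [ENNReal.tsum_mul_right, hcnt]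
  -- now the endgame
  intro ε hε
  set ρ : ℝ := ℓ / F with hρdef
  have hρpos : 0 < ρ := div_pos hℓ hfpos
  set δ₀ : ℝ := min (F/2) (ε * F^2 / (8*ℓ)) with hδ₀def
  have hδ₀pos : 0 < δ₀ := lt_min (by linarith) (by positivity)
  have hδ₀F : δ₀ ≤ F/2 := min_le_left _ _
  have hFδpos : 0 < F - δ₀ := by linarith
  set η : ℝ := ℓ * δ₀ / ((F - δ₀) * F) with hηdef
  have hηpos : 0 < η := by positivity
  have hηε : η ≤ ε / 4 := by
    have h1 : ℓ * δ₀ / ((F - δ₀) * F) ≤ ℓ * δ₀ / ((F/2) * F) := by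
      apply div_le_div_of_nonneg_left (by positivity) (by positivity)
      nlinarith
    have h2 : δ₀ ≤ ε * F^2 / (8*ℓ) := min_le_right _ _
    calc η ≤ ℓ * δ₀ / ((F/2) * F) := h1
      _ ≤ ℓ * (ε * F^2 / (8*ℓ)) / ((F/2) * F) := by
          apply div_le_div_of_nonneg_right _ (by positivity)
          nlinarith
      _ = ε / 4 := by field_simp; ring
  obtain ⟨r, hr1, hTr⟩ := hTsmall (ENNReal.ofReal δ₀) (ENNReal.ofReal_pos.mpr hδ₀pos)
  have hrpos : 0 < r := lt_of_lt_of_le one_pos hr1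
  -- limits of ratio functions
  have hratio : ∀ c : ℝ, Tendsto (fun R : ℝ => ((R + c)/R)^d) atTop (𝓝 1) := by
    intro c
    have h1 : Tendsto (fun R : ℝ => 1 + c/R) atTop (𝓝 (1 + 0)) :=
      tendsto_const_nhds.add (tendsto_const_nhds.div_atTop tendsto_id)
    have h2 : (fun R : ℝ => ((R + c)/R)^d) =ᶠ[atTop] fun R : ℝ => (1 + c/R)^d := by
      filter_upwards [eventually_gt_atTop (0:ℝ)] with R hR
      rw [add_div, div_self hR.ne']
    exact Tendsto.congr' h2.symm (by simpa using h1.pow d)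
  have hup : ∀ᶠ R : ℝ in atTop, (ρ + η) * ((R + r)/R)^d ≤ ρ + ε := by
    have h := (tendsto_const_nhds : Tendsto (fun _:ℝ => ρ + η) atTop (𝓝 (ρ + η))).mul (hratio r)
    rw [mul_one] at h
    exact h.eventually_le_const (by linarith)
  have hlo : ∀ᶠ R : ℝ in atTop, ρ - ε ≤ ρ * ((R - r)/R)^d - η := by
    have h := ((tendsto_const_nhds : Tendsto (fun _:ℝ => ρ) atTop (𝓝 ρ)).mul (hratio (-r))).sub
      (tendsto_const_nhds : Tendsto (fun _:ℝ => η) atTop (𝓝 η))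
    rw [mul_one] at h
    have h2 := h.eventually_const_le (show ρ - ε < ρ - η by linarith)
    filter_upwards [h2] with R hR
    simpa [sub_eq_add_neg] using hR
  obtain ⟨R₁, hR₁⟩ := (hup.and hlo).exists_forall_of_atTop
  refine ⟨max R₁ (r + 1), fun x R hR => ?_⟩
  have hRr : r < R := lt_of_lt_of_le (by linarith) (le_trans (le_max_right _ _) hR)
  have hR0 : 0 < R := lt_trans hrpos hRr
  obtain ⟨hRu, hRl⟩ := hR₁ R (le_trans (le_max_left _ _) hR)
  -- instantiate the estimates
  have hδeq : ENNReal.ofReal F - ENNReal.ofReal δ₀ = ENNReal.ofReal (F - δ₀) :=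
    (ENNReal.ofReal_sub F hδ₀pos.le).symm
  have hAx := hA (ENNReal.ofReal δ₀) r hrpos hTr x R hR0
  rw [hδeq] at hAx
  -- finiteness
  have hfin : (Λ ∩ ball x R).Finite := by
    rw [← Set.encard_ne_top_iff]
    intro htop
    have : cnt (ball x R) = ⊤ := by rw [hcntdef]; simp [htop]
    rw [this, ENNReal.top_mul (by simp [ENNReal.ofReal_eq_zero]; linarith)] at hAx
    exact (ENNReal.mul_lt_top ENNReal.ofReal_lt_top measure_ball_lt_top).ne (top_le_iff.mp hAx)
  refine ⟨hfin, ?_⟩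
  set N : ℕ := Nat.card ↥(Λ ∩ ball x R) with hNdef
  have hcntN : cnt (ball x R) = (N : ℝ≥0∞) := by
    have h1 : (Λ ∩ ball x R).encard = (N : ℕ∞) := by
      rw [hNdef, Nat.card_coe_set_eq, Set.ncard_def,
        ENat.coe_toNat (by rwa [Set.encard_ne_top_iff])]
    show ((Λ ∩ ball x R).encard : ℝ≥0∞) = (N : ℝ≥0∞)
    rw [h1]
    simp
  -- the K bound
  set K : ℝ≥0∞ := ENNReal.ofReal ℓ * (ENNReal.ofReal (R ^ d) * v) / ENNReal.ofReal (F - δ₀)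
    with hKdef
  have hKtop : K ≠ ⊤ := by
    apply (ENNReal.div_lt_top _ _).ne
    · exact (ENNReal.mul_lt_top ENNReal.ofReal_lt_top
        (ENNReal.mul_lt_top ENNReal.ofReal_lt_top hvtop.lt_top)).ne
    · simp [ENNReal.ofReal_eq_zero]; linarith
  have hKbound : ∀ c : (EuclideanSpace ℝ (Fin d)), cnt (ball c (R - r)) ≤ K := by
    intro c
    have := hA (ENNReal.ofReal δ₀) r hrpos hTr c (R - r) (by linarith)
    rw [hδeq, sub_add_cancel, vol_ball c R hR0] at this
    rw [hKdef]
    rw [ENNReal.le_div_iff_mul_le (Or.inl (by simp [ENNReal.ofReal_eq_zero]; linarith))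
      (Or.inl ENNReal.ofReal_ne_top)]
    exact this
  have hBx := hB (ENNReal.ofReal δ₀) K r hrpos hTr hKtop x R hRr hKbound
  -- convert to real inequalities
  rw [hcntN, vol_ball x (R + r) (by linarith)] at hAx
  rw [hcntN, vol_ball x (R - r) (by linarith)] at hBx
  have hineqA : (N : ℝ) * (F - δ₀) ≤ ℓ * ((R + r)^d * v₀) := by
    have := ENNReal.toReal_mono (ENNReal.mul_lt_top ENNReal.ofReal_lt_top
      (ENNReal.mul_lt_top ENNReal.ofReal_lt_top hvtop.lt_top)).ne hAx
    rwa [ENNReal.toReal_mul, ENNReal.toReal_mul, ENNReal.toReal_mul, ENNReal.toReal_ofReal hℓ.le,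
      ENNReal.toReal_ofReal hFδpos.le, ENNReal.toReal_ofReal (pow_nonneg (by linarith) d),
      ENNReal.toReal_natCast] at this
  have hKreal : K.toReal = ℓ * (R^d * v₀) / (F - δ₀) := by
    rw [hKdef, ENNReal.toReal_div, ENNReal.toReal_mul, ENNReal.toReal_mul,
      ENNReal.toReal_ofReal hℓ.le, ENNReal.toReal_ofReal (pow_nonneg hR0.le d),
      ENNReal.toReal_ofReal hFδpos.le]
  have hineqB : ℓ * ((R - r)^d * v₀) ≤ (N:ℝ) * F + (ℓ * (R^d * v₀) / (F - δ₀)) * δ₀ := by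
    have hne : (N : ℝ≥0∞) * ENNReal.ofReal F + K * ENNReal.ofReal δ₀ ≠ ⊤ := by
      apply ENNReal.add_ne_top.mpr
      exact ⟨(ENNReal.mul_lt_top (ENNReal.natCast_lt_top N) ENNReal.ofReal_lt_top).ne,
        (ENNReal.mul_lt_top hKtop.lt_top ENNReal.ofReal_lt_top).ne⟩
    have := ENNReal.toReal_mono hne hBx
    rwa [ENNReal.toReal_add ((ENNReal.mul_lt_top (ENNReal.natCast_lt_top N) ENNReal.ofReal_lt_top).ne)
      ((ENNReal.mul_lt_top hKtop.lt_top ENNReal.ofReal_lt_top).ne),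
      ENNReal.toReal_mul, ENNReal.toReal_mul, ENNReal.toReal_mul, ENNReal.toReal_mul,
      ENNReal.toReal_ofReal hℓ.le, ENNReal.toReal_ofReal (pow_nonneg (by linarith : (0:ℝ) ≤ R - r) d),
      ENNReal.toReal_ofReal hfpos.le, ENNReal.toReal_ofReal hδ₀pos.le,
      ENNReal.toReal_natCast, hKreal] at this
  -- final arithmetic
  rw [vol_ball x R hR0, ENNReal.toReal_mul, ENNReal.toReal_ofReal (pow_nonneg hR0.le d)]
  have hb : (0:ℝ) < R^d := pow_pos hR0 d
  have ha : (0:ℝ) < (R+r)^d := pow_pos (by linarith) d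
  have hc : (0:ℝ) < (R-r)^d := pow_pos (by linarith) d
  have hρη : ρ + η = ℓ / (F - δ₀) := by
    rw [hρdef, hηdef]; field_simp; ring
  have hup2 : (N:ℝ) / (R^d * v₀) ≤ ρ + ε := by
    rw [div_le_iff₀ (by positivity)]
    have h1 : (N:ℝ) ≤ ℓ * ((R+r)^d * v₀) / (F - δ₀) := by
      rw [le_div_iff₀ hFδpos]; exact hineqA
    have h2 : ℓ * ((R+r)^d * v₀) / (F - δ₀) = ((ρ+η) * ((R+r)/R)^d) * (R^d * v₀) := by
      rw [hρη, div_pow]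
      field_simp
    calc (N:ℝ) ≤ ((ρ+η) * ((R+r)/R)^d) * (R^d * v₀) := by rw [← h2]; exact h1
      _ ≤ (ρ+ε) * (R^d*v₀) := mul_le_mul_of_nonneg_right hRu (by positivity)
  have hlo2 : ρ - ε ≤ (N:ℝ)/(R^d*v₀) := by
    rw [le_div_iff₀ (by positivity)]
    have h3 : (ρ * ((R-r)/R)^d - η) * (R^d*v₀)
        = (ℓ*((R-r)^d*v₀) - (ℓ*(R^d*v₀)/(F-δ₀))*δ₀)/F := by
      rw [hρdef, hηdef, div_pow]
      field_simp
    calc (ρ-ε)*(R^d*v₀) ≤ (ρ*((R-r)/R)^d - η)*(R^d*v₀) :=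
          mul_le_mul_of_nonneg_right hRl (by positivity)
      _ = (ℓ*((R-r)^d*v₀) - (ℓ*(R^d*v₀)/(F-δ₀))*δ₀)/F := h3
      _ ≤ ((N:ℝ)*F)/F := by gcongr; linarith
      _ = (N:ℝ) := mul_div_cancel_right₀ _ hfpos.ne'
  rw [abs_le]
  constructor
  · linarith only [hlo2]
  · linarith only [hup2]
end
end
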